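/- arXiv:2009.06298 — 7 statements merged into one kernel-verified Lean document; each statement's English description precedes it below -/
import Mathlib

section
/- Let F be a finite field, C_k(α,v,η) a TGRS code of length n and dimension k with 1 ≤ k ≤ n−k, u_i := ∏_{j≠i}(α_i − α_j)^{−1} and a := Σ_{i=1}^n α_i. Suppose a ≠ 0 and η ≠ −a^{−1}. Then the dual code C_k(α,v,η)^⊥ equals the linear code {((u_1/v_1)·g(α_1), …, (u_n/v_n)·g(α_n)) : g(x) = Σ_{i=0}^{n−k−1} b_i x^i − (η/(1+aη))·b_{n−k−1} x^{n−k} with b_0,…,b_{n−k−1} ∈ F}. -/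
open Finset Polynomial

noncomputable section

/-- The twisted generalized Reed–Solomon (TGRS) code of length `n` and dimension `k`,
with evaluation points `α`, multipliers `v`, hook `k-1`, twist `1` and twist
coefficient `η`:  the set of words `(v i * f (α i))_i` where
`f(x) = Σ_{j<k} a_j x^j + η a_{k-1} x^k`. -/
def TGRSCode (F : Type*) [Field F] (n k : ℕ) (α v : Fin n → F) (η : F) :
    Set (Fin n → F) :=
  {c | ∃ a : ℕ → F, c = fun i =>
    v i * ((∑ j ∈ Finset.range k, a j * α i ^ j) + η * a (k - 1) * α i ^ k)}

/-- The dual of a code `C ⊆ F^n` under the standard inner product. -/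
def dualCode {F : Type*} [Field F] {n : ℕ} (C : Set (Fin n → F)) :
    Set (Fin n → F) :=
  {x | ∀ c ∈ C, ∑ i, x i * c i = 0}

/-- A code is self-dual if it coincides with its dual. -/
def IsSelfDual {F : Type*} [Field F] {n : ℕ} (C : Set (Fin n → F)) : Prop :=
  C = dualCode C

/-- The Hamming weight of a word. -/
def hwt {F : Type*} [Field F] {n : ℕ} (c : Fin n → F) : ℕ :=
  {i | c i ≠ 0}.ncard

/-- `C` has minimum (Hamming) distance exactly `d`. -/
def IsMinDist {F : Type*} [Field F] {n : ℕ} (C : Set (Fin n → F)) (d : ℕ) : Prop :=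
  (∃ c ∈ C, c ≠ 0 ∧ hwt c = d) ∧ ∀ c ∈ C, c ≠ 0 → d ≤ hwt c

namespace TGRSAux

variable {F : Type*} [Field F] {n : ℕ}

/-- Lagrange basis polynomial. -/
def Lag (α : Fin n → F) (i : Fin n) : F[X] :=
  C (∏ j ∈ Finset.univ.erase i, (α i - α j)⁻¹) * ∏ j ∈ Finset.univ.erase i, (X - C (α j))

lemma U_ne_zero {α : Fin n → F} (hα : Function.Injective α) (i : Fin n) :
    (∏ j ∈ Finset.univ.erase i, (α i - α j)⁻¹) ≠ 0 := by
  refine Finset.prod_ne_zero_iff.mpr fun j hj => ?_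
  exact inv_ne_zero (sub_ne_zero.mpr fun h => (Finset.mem_erase.mp hj).1 (hα h).symm)

lemma Lag_eval_self {α : Fin n → F} (hα : Function.Injective α) (i : Fin n) :
    (Lag α i).eval (α i) = 1 := by
  rw [Lag, eval_mul, eval_C, eval_prod, ← Finset.prod_mul_distrib]
  rw [Finset.prod_congr rfl (fun j hj => ?_), Finset.prod_const_one]
  simp only [eval_sub, eval_X, eval_C]
  exact inv_mul_cancel₀ (sub_ne_zero.mpr fun h => (Finset.mem_erase.mp hj).1 (hα h).symm)

lemma Lag_eval_ne {α : Fin n → F} {i i' : Fin n} (h : i' ≠ i) :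
    (Lag α i).eval (α i') = 0 := by
  have h0 : eval (α i') (X - C (α i')) = 0 := by simp
  rw [Lag, eval_mul, eval_prod]
  exact mul_eq_zero_of_right _
    (Finset.prod_eq_zero (Finset.mem_erase.mpr ⟨h, Finset.mem_univ i'⟩) h0)

lemma Lag_degree (α : Fin n → F) (i : Fin n) : (Lag α i).degree ≤ ((n - 1 : ℕ) : WithBot ℕ) := by
  have h1 : (∏ j ∈ Finset.univ.erase i, (X - C (α j))).degree ≤ ((n - 1 : ℕ) : WithBot ℕ) := by
    have hmonic : (∏ j ∈ Finset.univ.erase i, (X - C (α j))).Monic :=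
      monic_prod_of_monic _ _ fun j _ => monic_X_sub_C _
    have hdeg : (∏ j ∈ Finset.univ.erase i, (X - C (α j))).natDegree = n - 1 := by
      rw [natDegree_prod_of_monic _ _ fun j _ => monic_X_sub_C _]
      simp [natDegree_X_sub_C, Finset.card_erase_of_mem, Fintype.card_fin]
    exact hdeg ▸ degree_le_natDegree
  refine (degree_mul_le _ _).trans (le_trans (add_le_add degree_C_le h1) ?_)
  simp

lemma Lag_coeff (α : Fin n → F) (i : Fin n) :
    (Lag α i).coeff (n - 1) = ∏ j ∈ Finset.univ.erase i, (α i - α j)⁻¹ := by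
  have hmonic : (∏ j ∈ Finset.univ.erase i, (X - C (α j))).Monic :=
    monic_prod_of_monic _ _ fun j _ => monic_X_sub_C _
  have hdeg : (∏ j ∈ Finset.univ.erase i, (X - C (α j))).natDegree = n - 1 := by
    rw [natDegree_prod_of_monic _ _ fun j _ => monic_X_sub_C _]
    simp [natDegree_X_sub_C, Finset.card_erase_of_mem, Fintype.card_fin]
  rw [Lag, coeff_C_mul, ← hdeg, hmonic.coeff_natDegree, mul_one]

lemma interpolate_eq {α : Fin n → F} (hα : Function.Injective α) (hn : 0 < n)
    {p : F[X]} (hp : p.degree < (n : WithBot ℕ)) :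
    p = ∑ i, C (p.eval (α i)) * Lag α i := by
  set q : F[X] := p - ∑ i, C (p.eval (α i)) * Lag α i with hqdef
  have hsumdeg : (∑ i, C (p.eval (α i)) * Lag α i).degree < (n : WithBot ℕ) := by
    refine lt_of_le_of_lt (degree_sum_le _ _) ?_
    refine lt_of_le_of_lt (Finset.sup_le fun i _ => ?_) (?_ : ((n-1:ℕ) : WithBot ℕ) < n)
    · refine (degree_mul_le _ _).trans (le_trans (add_le_add degree_C_le (Lag_degree α i)) ?_)
      simp
    · exact_mod_cast Nat.sub_lt hn one_pos
  have hqdeg : q.degree < (n : WithBot ℕ) :=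
    lt_of_le_of_lt (degree_sub_le _ _) (max_lt hp hsumdeg)
  have hqeval : ∀ i, q.eval (α i) = 0 := by
    intro i
    rw [hqdef, eval_sub, eval_finset_sum]
    rw [Finset.sum_eq_single i (fun j _ hji => by
      rw [eval_mul, Lag_eval_ne (Ne.symm hji), mul_zero])
      (fun h => absurd (Finset.mem_univ i) h)]
    rw [eval_mul, eval_C, Lag_eval_self hα, mul_one, sub_self]
  have hq0 : q = 0 := by
    by_cases h0 : q = 0
    · exact h0
    · refine Polynomial.eq_zero_of_natDegree_lt_card_of_eval_eq_zero q hα hqeval ?_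
      rw [Fintype.card_fin]
      exact_mod_cast (degree_eq_natDegree h0) ▸ hqdeg
  exact sub_eq_zero.mp hq0
  
lemma key_lt {α : Fin n → F} (hα : Function.Injective α) (hn : 0 < n)
    {p : F[X]} (hp : p.degree < (n : WithBot ℕ)) :
    ∑ i, (∏ j ∈ Finset.univ.erase i, (α i - α j)⁻¹) * p.eval (α i) = p.coeff (n - 1) := by
  conv_rhs => rw [interpolate_eq hα hn hp]
  rw [finset_sum_coeff]
  refine (Finset.sum_congr rfl fun i _ => ?_).symm
  rw [coeff_C_mul, Lag_coeff]
  ring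

lemma key {α : Fin n → F} (hα : Function.Injective α) (hn : 0 < n)
    {p : F[X]} (hp : p.degree ≤ (n : WithBot ℕ)) :
    ∑ i, (∏ j ∈ Finset.univ.erase i, (α i - α j)⁻¹) * p.eval (α i)
      = p.coeff (n - 1) + (∑ i, α i) * p.coeff n := by
  set M : F[X] := ∏ i : Fin n, (X - C (α i)) with hM
  have hMmonic : M.Monic := monic_prod_of_monic _ _ fun i _ => monic_X_sub_C _
  have hMdeg : M.natDegree = n := by
    rw [hM, natDegree_prod_of_monic _ _ fun i _ => monic_X_sub_C _]
    simp [natDegree_X_sub_C]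
  set q : F[X] := p - C (p.coeff n) * M with hq
  have hqdeg : q.degree < (n : WithBot ℕ) := by
    rw [degree_lt_iff_coeff_zero]
    intro m hm
    rw [hq, coeff_sub, coeff_C_mul]
    rcases eq_or_lt_of_le hm with h | h
    · have : m = n := by exact_mod_cast h.symm
      subst this
      rw [← hMdeg, hMmonic.coeff_natDegree, mul_one, sub_self]
    · have hmn : n < m := by exact_mod_cast h
      rw [coeff_eq_zero_of_degree_lt (lt_of_le_of_lt hp (by exact_mod_cast hmn)),
        coeff_eq_zero_of_natDegree_lt (show M.natDegree < m by rw [hMdeg]; exact hmn)]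
      ring
  have heval : ∀ i, q.eval (α i) = p.eval (α i) := by
    intro i
    rw [hq, eval_sub, eval_mul, eval_C, hM, eval_prod,
      Finset.prod_eq_zero (Finset.mem_univ i)
        (show eval (α i) (X - C (α i)) = 0 by simp), mul_zero, sub_zero]
  have hkl := key_lt hα hn hqdeg
  rw [Finset.sum_congr rfl (fun i _ => by rw [heval i])] at hkl
  have hMc : M.coeff (n - 1) = -∑ i, α i := by
    have h := Polynomial.prod_X_sub_C_coeff_card_pred (Finset.univ : Finset (Fin n)) α
      (by simpa using hn)
    simpa using h
  rw [hkl, hq, coeff_sub, coeff_C_mul, hMc]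
  ring

/-- A twisted polynomial. -/
def TwistP (c : ℕ → F) (m : ℕ) (w : F) : F[X] :=
  (∑ j ∈ Finset.range m, C (c j) * X ^ j) + C w * X ^ m

lemma TwistP_coeff (c : ℕ → F) (m : ℕ) (w : F) (t : ℕ) :
    (TwistP c m w).coeff t = if t < m then c t else if t = m then w else 0 := by
  rw [TwistP, coeff_add, finset_sum_coeff]
  simp_rw [coeff_C_mul, coeff_X_pow, mul_ite, mul_one, mul_zero]
  rw [Finset.sum_ite_eq (Finset.range m) t c]
  rcases lt_trichotomy t m with h | h | h
  · simp [h, Nat.ne_of_lt h]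
  · simp [h]
  · simp [h.not_gt, (Nat.ne_of_lt h).symm]

lemma TwistP_degree (c : ℕ → F) (m : ℕ) (w : F) :
    (TwistP c m w).degree ≤ (m : WithBot ℕ) := by
  rw [degree_le_iff_coeff_zero]
  intro t ht
  have : m < t := by exact_mod_cast ht
  rw [TwistP_coeff]
  simp [Nat.lt_asymm this, (Nat.ne_of_lt this).symm]

lemma TwistP_eval (c : ℕ → F) (m : ℕ) (w : F) (x : F) :
    (TwistP c m w).eval x = (∑ j ∈ Finset.range m, c j * x ^ j) + w * x ^ m := by
  simp [TwistP, eval_finset_sum]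

end TGRSAux


open TGRSAux

/-- for a TGRS code with `a := Σ α_i ≠ 0` and `η ≠ -a⁻¹`, the dual code
is the evaluation code of the twisted polynomials
`g(x) = Σ_{j<n-k} b_j x^j - (η/(1+aη)) b_{n-k-1} x^{n-k}` with multipliers `u_i / v_i`. -/
theorem tgrs_dual_case_a_ne_zero (F : Type*) [Field F] [Fintype F] (n k : ℕ)
    (hk : 1 ≤ k) (hkn : k ≤ n - k)
    (α v : Fin n → F) (hα : Function.Injective α) (hv : ∀ i, v i ≠ 0)
    (η : F) (hη : η ≠ 0)
    (u : Fin n → F) (hu : ∀ i, u i = ∏ j ∈ Finset.univ.erase i, (α i - α j)⁻¹)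
    (a : F) (ha : a = ∑ i, α i) (ha0 : a ≠ 0) (hηa : η ≠ -a⁻¹) :
    dualCode (TGRSCode F n k α v η) =
      {x : Fin n → F | ∃ b : ℕ → F, x = fun i =>
        (u i / v i) * ((∑ j ∈ Finset.range (n - k), b j * α i ^ j)
          - (η / (1 + a * η)) * b (n - k - 1) * α i ^ (n - k))} := by
  classical
  have hkn2 : 2 * k ≤ n := by omega
  have hn0 : 0 < n := by omega
  have h1a : 1 + a * η ≠ 0 := by
    intro h
    apply hηa
    field_simp
    linear_combination h
  have hU : ∀ i, (∏ j ∈ Finset.univ.erase i, (α i - α j)⁻¹) ≠ 0 := U_ne_zero hα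
  have hP : ∀ i, (∏ j ∈ Finset.univ.erase i, (α i - α j)) ≠ 0 := fun i =>
    Finset.prod_ne_zero_iff.mpr fun j hj =>
      sub_ne_zero.mpr fun h => (Finset.mem_erase.mp hj).1 (hα h).symm
  ext x
  simp only [Set.mem_setOf_eq]
  constructor
  · -- dual ⊆ evaluation code
    intro hx
    set g : F[X] := ∑ i, C (v i * x i / (∏ j ∈ Finset.univ.erase i, (α i - α j)⁻¹)) * Lag α i
      with hgdef
    have hgdeg : g.degree < (n : WithBot ℕ) := by
      refine lt_of_le_of_lt (degree_sum_le _ _)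
        (lt_of_le_of_lt (Finset.sup_le fun i _ => ?_) (?_ : ((n-1:ℕ) : WithBot ℕ) < n))
      · exact (degree_mul_le _ _).trans
          (le_trans (add_le_add degree_C_le (Lag_degree α i)) (by simp))
      · exact_mod_cast Nat.sub_lt hn0 one_pos
    have hgeval : ∀ i, g.eval (α i)
        = v i * x i / (∏ j ∈ Finset.univ.erase i, (α i - α j)⁻¹) := by
      intro i
      rw [hgdef, eval_finset_sum]
      rw [Finset.sum_eq_single i (fun j _ hji => by
        rw [eval_mul, Lag_eval_ne (Ne.symm hji), mul_zero])
        (fun h => absurd (Finset.mem_univ i) h)]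
      rw [eval_mul, eval_C, Lag_eval_self hα, mul_one]
    have hcond : ∀ c : ℕ → F,
        ∑ i, (∏ j ∈ Finset.univ.erase i, (α i - α j)⁻¹)
          * ((TwistP c k (η * c (k-1))) * g).eval (α i) = 0 := by
      intro c
      have h := hx (fun i => v i * ((∑ j ∈ Finset.range k, c j * α i ^ j)
        + η * c (k - 1) * α i ^ k)) ⟨c, rfl⟩
      rw [← h]
      refine Finset.sum_congr rfl fun i _ => ?_
      rw [eval_mul, TwistP_eval, hgeval i]
      field_simp [hP i]
    have hvan : ∀ j, j < k → ∀ m, n - j ≤ m → g.coeff m = 0 := by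
      intro j
      induction j with
      | zero =>
        intro _ m hm
        exact coeff_eq_zero_of_degree_lt
          (lt_of_lt_of_le hgdeg (by exact_mod_cast (by omega : n ≤ m)))
      | succ j ih =>
        intro hjk m hm
        have hj : j < k := by omega
        by_cases hcase : n - j ≤ m
        · exact ih hj m hcase
        have hmeq : m = n - 1 - j := by omega
        subst hmeq
        set c : ℕ → F := fun t => if t = j then (1:F) else 0 with hc
        have hfc : ∀ p, (TwistP c k (η * c (k-1))).coeff p = if p = j then 1 else 0 := by
          intro p
          have hck : c (k-1) = 0 := by
            simp only [hc]; rw [if_neg (by omega)]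
          rw [TwistP_coeff, hck, mul_zero]
          simp only [hc]
          split_ifs <;> first | rfl | omega
        have hpdeg : ((TwistP c k (η * c (k-1))) * g).degree ≤ (n : WithBot ℕ) := by
          rw [degree_le_iff_coeff_zero]
          intro t ht
          have hnt : n < t := by exact_mod_cast ht
          rw [coeff_mul]
          refine Finset.sum_eq_zero fun pq hpq => ?_
          rw [Finset.HasAntidiagonal.mem_antidiagonal] at hpq
          rw [hfc]
          split_ifs with h
          · rw [ih hj pq.2 (by omega), mul_zero]
          · rw [zero_mul]
        have hkey := key hα hn0 hpdeg
        rw [hcond c] at hkey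
        have hc1 : ((TwistP c k (η * c (k-1))) * g).coeff (n-1) = g.coeff (n-1-j) := by
          rw [coeff_mul]
          rw [Finset.sum_eq_single_of_mem (j, n-1-j)
            (by rw [Finset.HasAntidiagonal.mem_antidiagonal]; omega) ?_]
          · rw [hfc, if_pos rfl, one_mul]
          · rintro ⟨p, q⟩ hpq hne
            rw [Finset.HasAntidiagonal.mem_antidiagonal] at hpq
            have h2 : ¬(p = j ∧ q = n-1-j) := fun hh => hne (by simp [hh.1, hh.2])
            rw [hfc]
            split_ifs with h
            · exfalso; omega
            · rw [zero_mul]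
        have hc2 : ((TwistP c k (η * c (k-1))) * g).coeff n = 0 := by
          rw [coeff_mul]
          refine Finset.sum_eq_zero fun pq hpq => ?_
          rw [Finset.HasAntidiagonal.mem_antidiagonal] at hpq
          rw [hfc]
          split_ifs with h
          · rw [ih hj pq.2 (by omega), mul_zero]
          · rw [zero_mul]
        rw [hc1, hc2, mul_zero, add_zero] at hkey
        exact hkey.symm
    have hgle : g.degree ≤ ((n - k : ℕ) : WithBot ℕ) := by
      rw [degree_le_iff_coeff_zero]
      intro t ht
      have hnt : n - k < t := by exact_mod_cast ht
      exact hvan (k-1) (by omega) t (by omega)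
    have hgnat : g.natDegree < n - k + 1 := by
      have := natDegree_le_iff_degree_le.mpr hgle
      omega
    have htw : (1 + a * η) * g.coeff (n - k) + η * g.coeff (n - k - 1) = 0 := by
      set c : ℕ → F := fun t => if t = k - 1 then (1:F) else 0 with hc
      have hck : c (k-1) = 1 := by simp [hc]
      have hfc : ∀ p, (TwistP c k (η * c (k-1))).coeff p
          = if p = k-1 then 1 else if p = k then η else 0 := by
        intro p
        rw [TwistP_coeff, hck, mul_one]
        simp only [hc]
        split_ifs <;> first | rfl | omega
      have hzero : ∀ p q : ℕ, ¬(p = k-1) → ¬(p = k) →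
          (TwistP c k (η * c (k-1))).coeff p * g.coeff q = 0 := by
        intro p q h1 h2
        rw [hfc, if_neg h1, if_neg h2, zero_mul]
      have hpdeg : ((TwistP c k (η * c (k-1))) * g).degree ≤ (n : WithBot ℕ) := by
        rw [degree_le_iff_coeff_zero]
        intro t ht
        have hnt : n < t := by exact_mod_cast ht
        rw [coeff_mul]
        refine Finset.sum_eq_zero fun pq hpq => ?_
        rw [Finset.HasAntidiagonal.mem_antidiagonal] at hpq
        rw [hfc]
        split_ifs with h1 h2
        · rw [hvan (k-1) (by omega) pq.2 (by omega), mul_zero]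
        · rw [hvan (k-1) (by omega) pq.2 (by omega), mul_zero]
        · rw [zero_mul]
      have hkey := key hα hn0 hpdeg
      rw [hcond c] at hkey
      have hc1 : ((TwistP c k (η * c (k-1))) * g).coeff (n-1)
          = g.coeff (n-k) + η * g.coeff (n-k-1) := by
        rw [coeff_mul]
        have hm1 : ((k-1 : ℕ), n-k) ∈ Finset.HasAntidiagonal.antidiagonal (n-1) := by
          rw [Finset.HasAntidiagonal.mem_antidiagonal]; omega
        rw [← Finset.sum_erase_add _ _ hm1]
        rw [Finset.sum_eq_single_of_mem ((k : ℕ), n-k-1)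
          (Finset.mem_erase.mpr ⟨by simp only [ne_eq, Prod.mk.injEq, not_and]; omega,
            by rw [Finset.HasAntidiagonal.mem_antidiagonal]; omega⟩) ?_]
        · rw [hfc, hfc, if_pos rfl, if_neg (by omega), if_pos rfl, one_mul]
          ring
        · rintro ⟨p, q⟩ hpq hne
          have hpm := Finset.mem_erase.mp hpq
          have hpq' := hpm.2
          rw [Finset.HasAntidiagonal.mem_antidiagonal] at hpq'
          have h1 : ¬(p = k-1 ∧ q = n-k) := fun hh => hpm.1 (by simp [hh.1, hh.2])
          have h2 : ¬(p = k ∧ q = n-k-1) := fun hh => hne (by simp [hh.1, hh.2])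
          rw [hfc]
          split_ifs <;> first | (exfalso; omega) | rw [zero_mul]
      have hc2 : ((TwistP c k (η * c (k-1))) * g).coeff n = η * g.coeff (n-k) := by
        rw [coeff_mul]
        rw [Finset.sum_eq_single_of_mem ((k : ℕ), n-k)
          (by rw [Finset.HasAntidiagonal.mem_antidiagonal]; omega) ?_]
        · rw [hfc, if_neg (by omega), if_pos rfl]
        · rintro ⟨p, q⟩ hpq hne
          rw [Finset.HasAntidiagonal.mem_antidiagonal] at hpq
          have h2 : ¬(p = k ∧ q = n-k) := fun hh => hne (by simp [hh.1, hh.2])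
          rw [hfc]
          split_ifs with hp1 hp2
          · rw [hvan (k-1) (by omega) q (by omega), mul_zero]
          · exfalso; omega
          · rw [zero_mul]
      rw [hc1, hc2, ← ha] at hkey
      linear_combination -hkey
    have hgnk : g.coeff (n-k) = -(η / (1 + a * η)) * g.coeff (n-k-1) := by
      have hh : g.coeff (n-k) = -(η * g.coeff (n-k-1)) / (1 + a * η) := by
        rw [eq_div_iff h1a]; linear_combination htw
      rw [hh]; ring
    refine ⟨fun t => g.coeff t, funext fun i => ?_⟩
    rw [hu i]
    have e1 : (∑ j ∈ Finset.range (n-k), g.coeff j * α i ^ j)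
        - η/(1+a*η) * g.coeff (n-k-1) * α i ^ (n-k) = g.eval (α i) := by
      rw [eval_eq_sum_range' hgnat, Finset.sum_range_succ, hgnk]
      ring
    rw [e1, hgeval i]
    field_simp [hP i]
    rw [mul_div_cancel_right₀ _ (hv i)]
  · -- evaluation code ⊆ dual
    rintro ⟨b, rfl⟩ c hc
    obtain ⟨afun, rfl⟩ := hc
    set fp : F[X] := TwistP afun k (η * afun (k-1)) with hfp
    set gp : F[X] := TwistP b (n-k) (-(η/(1+a*η) * b (n-k-1))) with hgp
    have hstep : ∑ i, ((u i / v i) * ((∑ j ∈ Finset.range (n - k), b j * α i ^ j)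
          - (η / (1 + a * η)) * b (n - k - 1) * α i ^ (n - k)))
        * (v i * ((∑ j ∈ Finset.range k, afun j * α i ^ j) + η * afun (k - 1) * α i ^ k))
        = ∑ i, (∏ j ∈ Finset.univ.erase i, (α i - α j)⁻¹) * (fp * gp).eval (α i) := by
      refine Finset.sum_congr rfl fun i _ => ?_
      rw [hu i, eval_mul, hfp, hgp, TwistP_eval, TwistP_eval]
      field_simp [hP i]
      rw [div_eq_iff (hv i)]
      ring
    have hdeg : (fp * gp).degree ≤ (n : WithBot ℕ) := by
      refine (degree_mul_le _ _).trans
        (le_trans (add_le_add (TwistP_degree _ _ _) (TwistP_degree _ _ _)) ?_)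
      rw [← Nat.cast_add]
      exact_mod_cast le_of_eq (by omega : k + (n-k) = n)
    have hkey := key hα hn0 hdeg
    have hc1 : (fp * gp).coeff (n-1)
        = afun (k-1) * (-(η/(1+a*η) * b (n-k-1))) + (η * afun (k-1)) * b (n-k-1) := by
      rw [coeff_mul]
      have hm1 : ((k-1 : ℕ), n-k) ∈ Finset.HasAntidiagonal.antidiagonal (n-1) := by
        rw [Finset.HasAntidiagonal.mem_antidiagonal]; omega
      rw [← Finset.sum_erase_add _ _ hm1]
      rw [Finset.sum_eq_single_of_mem ((k : ℕ), n-k-1)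
        (Finset.mem_erase.mpr ⟨by simp only [ne_eq, Prod.mk.injEq, not_and]; omega,
          by rw [Finset.HasAntidiagonal.mem_antidiagonal]; omega⟩) ?_]
      · rw [hfp, hgp, TwistP_coeff, TwistP_coeff, TwistP_coeff, TwistP_coeff,
          if_pos (by omega : k-1 < k), if_neg (by omega : ¬ n-k < n-k), if_pos rfl,
          if_neg (by omega : ¬ k < k), if_pos rfl, if_pos (by omega : n-k-1 < n-k)]
        ring
      · rintro ⟨p, q⟩ hpq hne
        have hpm := Finset.mem_erase.mp hpq
        have hpq' := hpm.2
        rw [Finset.HasAntidiagonal.mem_antidiagonal] at hpq'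
        have h1 : ¬(p = k-1 ∧ q = n-k) := fun hh => hpm.1 (by simp [hh.1, hh.2])
        have h2 : ¬(p = k ∧ q = n-k-1) := fun hh => hne (by simp [hh.1, hh.2])
        rw [hfp, hgp, TwistP_coeff, TwistP_coeff]
        split_ifs <;> first | (exfalso; omega) | ring
    have hc2 : (fp * gp).coeff n = (η * afun (k-1)) * (-(η/(1+a*η) * b (n-k-1))) := by
      rw [coeff_mul]
      rw [Finset.sum_eq_single_of_mem ((k : ℕ), n-k)
        (by rw [Finset.HasAntidiagonal.mem_antidiagonal]; omega) ?_]
      · rw [hfp, hgp, TwistP_coeff, TwistP_coeff, if_neg (by omega : ¬ k < k), if_pos rfl,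
          if_neg (by omega : ¬ n-k < n-k), if_pos rfl]
      · rintro ⟨p, q⟩ hpq hne
        rw [Finset.HasAntidiagonal.mem_antidiagonal] at hpq
        have h2 : ¬(p = k ∧ q = n-k) := fun hh => hne (by simp [hh.1, hh.2])
        rw [hfp, hgp, TwistP_coeff, TwistP_coeff]
        split_ifs <;> first | (exfalso; omega) | ring
    rw [hstep, hkey, hc1, hc2, ← ha]
    field_simp
    have h1a' : (1 + η * a)⁻¹ * (1 + η * a) = 1 := inv_mul_cancel₀ (by rwa [mul_comm η a])
    linear_combination (-(afun (k-1) * η * b (n-k-1))) * h1a'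
end
end

section
/- Let F be a finite field, C_k(α,v,η) a TGRS code of length n and dimension k with 1 ≤ k ≤ n−k, u_i := ∏_{j≠i}(α_i − α_j)^{−1} and a := Σ_{i=1}^n α_i. Suppose a = 0 and η ≠ 0. Then the dual code C_k(α,v,η)^⊥ equals the linear code {((u_1/v_1)·g(α_1), …, (u_n/v_n)·g(α_n)) : g(x) = Σ_{i=0}^{n−k−1} b_i x^i − η·b_{n−k−1} x^{n−k} with b_0,…,b_{n−k−1} ∈ F}. -/
open Finset Polynomial

noncomputable section

namespace TGRSAux
variable {F : Type*} [Field F] {n : ℕ}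

lemma u_ne_zero (α : Fin n → F) (hα : Function.Injective α) (i : Fin n) :
    (∏ j ∈ Finset.univ.erase i, (α i - α j)⁻¹) ≠ 0 := by
  rw [Finset.prod_ne_zero_iff]
  intro j hj
  rw [Finset.mem_erase] at hj
  exact inv_ne_zero (sub_ne_zero.mpr (fun h => hj.1 (hα h).symm))

lemma basis_eq (α : Fin n → F) (i : Fin n) :
    Lagrange.basis Finset.univ α i =
      C (∏ j ∈ Finset.univ.erase i, (α i - α j)⁻¹) *
        Lagrange.nodal (Finset.univ.erase i) α := by
  rw [Lagrange.basis, Lagrange.nodal]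
  simp_rw [Lagrange.basisDivisor]
  rw [Finset.prod_mul_distrib, map_prod]

lemma coeff_basis (α : Fin n → F) (i : Fin n) :
    (Lagrange.basis Finset.univ α i).coeff (n - 1) =
      ∏ j ∈ Finset.univ.erase i, (α i - α j)⁻¹ := by
  rw [basis_eq, coeff_C_mul]
  have hdeg : (Lagrange.nodal (Finset.univ.erase i) α).natDegree = n - 1 := by
    rw [Lagrange.natDegree_nodal, Finset.card_erase_of_mem (Finset.mem_univ i),
      Finset.card_univ, Fintype.card_fin]
  rw [← hdeg, (Lagrange.nodal_monic).coeff_natDegree, mul_one]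

lemma coeff_interpolate (α : Fin n → F) (r : Fin n → F) :
    (Lagrange.interpolate Finset.univ α r).coeff (n - 1) =
      ∑ i, r i * ∏ j ∈ Finset.univ.erase i, (α i - α j)⁻¹ := by
  rw [Lagrange.interpolate_apply, Polynomial.finset_sum_coeff]
  exact Finset.sum_congr rfl fun i _ => by rw [coeff_C_mul, coeff_basis]

lemma psum_le (hn : 0 < n) (α : Fin n → F) (hα : Function.Injective α)
    {r : ℕ} (hr : r ≤ n - 1) :
    ∑ i, (∏ j ∈ Finset.univ.erase i, (α i - α j)⁻¹) * α i ^ r =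
      if r = n - 1 then 1 else 0 := by
  have hinj : Set.InjOn α ↑(Finset.univ : Finset (Fin n)) := fun x _ y _ h => hα h
  have hX : (X ^ r : F[X]) = Lagrange.interpolate Finset.univ α (fun i => α i ^ r) := by
    apply Lagrange.eq_interpolate_of_eval_eq _ hinj
    · rw [Finset.card_univ, Fintype.card_fin, degree_X_pow]
      exact_mod_cast lt_of_le_of_lt hr (Nat.pred_lt hn.ne')
    · intro i _; simp
  have := congrArg (fun p : F[X] => p.coeff (n - 1)) hX
  simp only [coeff_X_pow, coeff_interpolate] at this
  rw [← Finset.sum_congr rfl (fun i _ => mul_comm ((α i) ^ r) _), ← this]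
  simp [eq_comm]

lemma psum_top (hn : 0 < n) (α : Fin n → F) (hα : Function.Injective α) :
    ∑ i, (∏ j ∈ Finset.univ.erase i, (α i - α j)⁻¹) * α i ^ n = ∑ i, α i := by
  have hinj : Set.InjOn α ↑(Finset.univ : Finset (Fin n)) := fun x _ y _ h => hα h
  set p : F[X] := X ^ n - Lagrange.nodal Finset.univ α with hp
  have hcard : (Finset.univ : Finset (Fin n)).card = n := by simp
  have hdeg : p.degree < n := by
    have h1 : (X ^ n : F[X]).degree = (Lagrange.nodal Finset.univ α).degree := by
      rw [degree_X_pow, Lagrange.degree_nodal, hcard]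
    have := Polynomial.degree_sub_lt h1 (by exact_mod_cast pow_ne_zero n X_ne_zero)
      (by rw [leadingCoeff_X_pow, (Lagrange.nodal_monic).leadingCoeff])
    rwa [degree_X_pow] at this
  have hXp : p = Lagrange.interpolate Finset.univ α (fun i => α i ^ n) := by
    apply Lagrange.eq_interpolate_of_eval_eq _ hinj (by rwa [hcard])
    intro i _
    simp [hp, Lagrange.eval_nodal_at_node (Finset.mem_univ i)]
  have hc := congrArg (fun q : F[X] => q.coeff (n - 1)) hXp
  simp only [coeff_interpolate, hp, coeff_sub, coeff_X_pow] at hc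
  have hnodal : (Lagrange.nodal Finset.univ α).coeff (n - 1) = -∑ i, α i := by
    rw [Lagrange.nodal_eq]
    have := Polynomial.prod_X_sub_C_coeff_card_pred Finset.univ α (by rwa [hcard])
    rwa [hcard] at this
  rw [if_neg (by omega), hnodal, zero_sub, neg_neg] at hc
  rw [hc]
  exact Finset.sum_congr rfl (fun i _ => mul_comm _ _)

lemma sum_u_eval (hn : 0 < n) (α : Fin n → F) (hα : Function.Injective α)
    (p : F[X]) (hp : p.natDegree ≤ n) :
    ∑ i, (∏ j ∈ Finset.univ.erase i, (α i - α j)⁻¹) * p.eval (α i) =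
      p.coeff (n - 1) + p.coeff n * ∑ i, α i := by
  have h1 : ∀ x : F, p.eval x = ∑ r ∈ Finset.range (n + 1), p.coeff r * x ^ r :=
    fun x => eval_eq_sum_range' (Nat.lt_succ_of_le hp) x
  calc ∑ i, (∏ j ∈ Finset.univ.erase i, (α i - α j)⁻¹) * p.eval (α i)
      = ∑ r ∈ Finset.range (n + 1), p.coeff r *
          ∑ i, (∏ j ∈ Finset.univ.erase i, (α i - α j)⁻¹) * α i ^ r := by
        simp_rw [h1, Finset.mul_sum]
        rw [Finset.sum_comm]
        exact Finset.sum_congr rfl fun r _ =>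
          Finset.sum_congr rfl fun i _ => by ring
    _ = ∑ r ∈ Finset.range (n + 1),
          ((if r = n - 1 then p.coeff (n - 1) else 0) +
           (if r = n then p.coeff n * ∑ i, α i else 0)) := by
        refine Finset.sum_congr rfl fun r hr => ?_
        rw [Finset.mem_range] at hr
        by_cases h : r = n
        · subst h
          rw [psum_top hn α hα, if_neg (by omega), if_pos rfl, zero_add]
        · rw [psum_le hn α hα (by omega), if_neg h]
          by_cases h2 : r = n - 1
          · subst h2; simp
          · simp [h2]
    _ = p.coeff (n - 1) + p.coeff n * ∑ i, α i := by
        rw [Finset.sum_add_distrib, Finset.sum_ite_eq' (Finset.range (n + 1)) (n - 1),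
          Finset.sum_ite_eq' (Finset.range (n + 1)) n, if_pos (by simp),
          if_pos (by simp)]

/-- The polynomial of the twisted space with hook `k-1`, twist coefficient `c`. -/
def tw (k : ℕ) (c : F) (a : ℕ → F) : F[X] :=
  (∑ j ∈ Finset.range k, C (a j) * X ^ j) + C (c * a (k - 1)) * X ^ k

lemma eval_tw (k : ℕ) (c : F) (a : ℕ → F) (x : F) :
    (tw k c a).eval x = (∑ j ∈ Finset.range k, a j * x ^ j) + c * a (k - 1) * x ^ k := by
  simp [tw, eval_finset_sum]

lemma coeff_sum_range (a : ℕ → F) (k r : ℕ) :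
    (∑ j ∈ Finset.range k, C (a j) * X ^ j).coeff r = if r < k then a r else 0 := by
  rw [finset_sum_coeff]
  simp_rw [coeff_C_mul, coeff_X_pow, mul_ite, mul_one, mul_zero]
  simp [Finset.sum_ite_eq' (Finset.range k) r, Finset.mem_range, eq_comm]

lemma natDegree_sum_range_le (a : ℕ → F) (k : ℕ) :
    (∑ j ∈ Finset.range k, C (a j) * X ^ j).natDegree ≤ k - 1 := by
  refine natDegree_le_iff_coeff_eq_zero.mpr fun N hN => ?_
  rw [coeff_sum_range, if_neg (by omega)]

lemma natDegree_tw_le (k : ℕ) (c : F) (a : ℕ → F) : (tw k c a).natDegree ≤ k := by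
  refine (natDegree_add_le _ _).trans (max_le ((natDegree_sum_range_le a k).trans (by omega)) ?_)
  exact (natDegree_C_mul_le _ _).trans (natDegree_X_pow_le k)

lemma coeff_tw_lt (k : ℕ) (c : F) (a : ℕ → F) {r : ℕ} (hr : r < k) :
    (tw k c a).coeff r = a r := by
  rw [tw, coeff_add, coeff_sum_range, if_pos hr, coeff_C_mul, coeff_X_pow,
    if_neg (by omega), mul_zero, add_zero]

lemma coeff_tw_top (k : ℕ) (c : F) (a : ℕ → F) :
    (tw k c a).coeff k = c * a (k - 1) := by
  rw [tw, coeff_add, coeff_sum_range, if_neg (by omega), coeff_C_mul, coeff_X_pow,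
    if_pos rfl, mul_one, zero_add]

/-- Key pairing computation. -/
lemma pairing (hn : 0 < n) (α : Fin n → F) (hα : Function.Injective α)
    (ha : ∑ i, α i = 0) {k m : ℕ} (hk : 1 ≤ k) (hm : 1 ≤ m) (hkm : k + m = n)
    (η : F) (a b : ℕ → F) :
    ∑ i, (∏ j ∈ Finset.univ.erase i, (α i - α j)⁻¹) *
      ((tw k η a).eval (α i) * (tw m (-η) b).eval (α i)) = 0 := by
  have hdeg : ((tw k η a) * (tw m (-η) b)).natDegree ≤ n :=
    (natDegree_mul_le).trans (by
      have := natDegree_tw_le k η a; have := natDegree_tw_le m (-η) b; omega)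
  have h := sum_u_eval hn α hα ((tw k η a) * (tw m (-η) b)) hdeg
  simp_rw [eval_mul] at h
  rw [h, ha, mul_zero, add_zero]
  rw [coeff_mul]
  have : ∀ x ∈ Finset.HasAntidiagonal.antidiagonal (n - 1),
      (tw k η a).coeff x.1 * (tw m (-η) b).coeff x.2 =
      (if x = (k - 1, m) then a (k - 1) * (-η * b (m - 1)) else 0) +
      (if x = (k, m - 1) then η * a (k - 1) * b (m - 1) else 0) := by
    rintro ⟨x, y⟩ hxy
    rw [Finset.HasAntidiagonal.mem_antidiagonal] at hxy
    simp only [Prod.mk.injEq, Prod.ext_iff]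
    by_cases h1 : x = k - 1 ∧ y = m
    · rw [if_pos h1, if_neg (fun h => by omega), add_zero, h1.1, h1.2,
        coeff_tw_lt k η a (by omega), coeff_tw_top]
    · by_cases h2 : x = k ∧ y = m - 1
      · rw [if_pos h2, if_neg (fun h => h1 (by omega)), zero_add, h2.1, h2.2,
          coeff_tw_top, coeff_tw_lt m (-η) b (by omega)]
      · rw [if_neg (by tauto), if_neg (by tauto), add_zero]
        by_cases hx : x ≤ k
        · have hy : m ≤ y ∨ (x = k ∧ y = m - 1) ∨ (x = k - 1 ∧ y = m) := by omega
          rcases hy with hy | hy | hy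
          · rcases lt_or_eq_of_le hy with hy' | hy'
            · rw [coeff_eq_zero_of_natDegree_lt
                (lt_of_le_of_lt (natDegree_tw_le m (-η) b) hy'), mul_zero]
            · omega
          · exact absurd hy h2
          · exact absurd hy h1
        · rw [coeff_eq_zero_of_natDegree_lt
            (lt_of_le_of_lt (natDegree_tw_le k η a) (by omega)), zero_mul]
  rw [Finset.sum_congr rfl this, Finset.sum_add_distrib,
    Finset.sum_ite_eq' _ ((k - 1, m) : ℕ × ℕ), Finset.sum_ite_eq' _ ((k, m - 1) : ℕ × ℕ),
    if_pos (by rw [Finset.HasAntidiagonal.mem_antidiagonal]; omega),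
    if_pos (by rw [Finset.HasAntidiagonal.mem_antidiagonal]; omega)]
  ring

/-- The dot-product bilinear form on `Fin n → F`. -/
def dotB (F : Type*) [Field F] (n : ℕ) : LinearMap.BilinForm F (Fin n → F) :=
  LinearMap.mk₂ F (fun x y => ∑ i, x i * y i)
    (fun x x' y => by simp [add_mul, Finset.sum_add_distrib])
    (fun c x y => by simp [Finset.mul_sum, mul_assoc])
    (fun x y y' => by simp [mul_add, Finset.sum_add_distrib])
    (fun c x y => by
      simp only [Pi.smul_apply, smul_eq_mul, Finset.mul_sum]
      exact Finset.sum_congr rfl fun i _ => by ring)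

lemma dotB_apply (x y : Fin n → F) : dotB F n x y = ∑ i, x i * y i := rfl

lemma dotB_nondegenerate : (dotB F n).Nondegenerate := by
  refine ⟨?_, ?_⟩
  · intro x h
    funext i
    have := h (Pi.single i 1)
    simp only [dotB_apply, Pi.single_apply, mul_ite, mul_one, mul_zero] at this
    rwa [Finset.sum_ite_eq' Finset.univ i x, if_pos (Finset.mem_univ i)] at this
  · intro x h
    funext i
    have := h (Pi.single i 1)
    simp only [dotB_apply, Pi.single_apply, ite_mul, one_mul, zero_mul] at this
    rwa [Finset.sum_ite_eq' Finset.univ i x, if_pos (Finset.mem_univ i)] at this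

lemma dotB_refl : (dotB F n).IsRefl := by
  intro x y h
  simp only [dotB_apply] at h ⊢
  rw [← h]
  exact Finset.sum_congr rfl fun i _ => mul_comm _ _

def twL (k : ℕ) (c : F) : (ℕ → F) →ₗ[F] F[X] where
  toFun a := tw k c a
  map_add' a b := by
    simp only [tw, Pi.add_apply, C_add, add_mul, mul_add, Finset.sum_add_distrib]
    ring
  map_smul' r a := by
    simp only [RingHom.id_apply, Polynomial.smul_eq_C_mul, Pi.smul_apply, smul_eq_mul, tw,
      mul_add, Finset.mul_sum]
    congr 1
    · exact Finset.sum_congr rfl fun j _ => by rw [← mul_assoc, ← C_mul]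
    · rw [← mul_assoc (C r), ← C_mul]
      congr 2
      ring

def evalWord (α w : Fin n → F) : F[X] →ₗ[F] (Fin n → F) where
  toFun p := fun i => w i * p.eval (α i)
  map_add' p q := by funext i; simp [mul_add]
  map_smul' c p := by funext i; simp; ring

lemma extend_val_lt {k : ℕ} (a' : Fin k → F) {j : ℕ} (hj : j < k) :
    Function.extend Fin.val a' 0 j = a' ⟨j, hj⟩ :=
  Fin.val_injective.extend_apply a' 0 ⟨j, hj⟩

/-- The full encoding map. -/
def enc (k : ℕ) (c : F) (α w : Fin n → F) : (Fin k → F) →ₗ[F] (Fin n → F) :=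
  (evalWord α w).comp ((twL k c).comp (Function.ExtendByZero.linearMap F (Fin.val (n := k))))

lemma enc_apply (k : ℕ) (c : F) (α w : Fin n → F) (a' : Fin k → F) (i : Fin n) :
    enc k c α w a' i = w i * (tw k c (Function.extend Fin.val a' 0)).eval (α i) := rfl

lemma enc_injective (α w : Fin n → F) (hα : Function.Injective α) (hw : ∀ i, w i ≠ 0)
    {k : ℕ} (c : F) (hkn : k < n) : Function.Injective (enc k c α w) := by
  refine (injective_iff_map_eq_zero _).mpr fun a' h0 => ?_
  have heval : ∀ i, (tw k c (Function.extend Fin.val a' 0)).eval (α i) = 0 := by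
    intro i
    have h := congrFun h0 i
    rw [enc_apply] at h
    exact (mul_eq_zero.mp h).resolve_left (hw i)
  have hp0 : tw k c (Function.extend Fin.val a' 0) = 0 :=
    Polynomial.eq_zero_of_natDegree_lt_card_of_eval_eq_zero _ hα heval
      (by rw [Fintype.card_fin]; exact lt_of_le_of_lt (natDegree_tw_le k c _) hkn)
  funext j
  have h := coeff_tw_lt k c (Function.extend Fin.val a' 0) j.isLt
  rw [hp0, coeff_zero] at h
  rw [Pi.zero_apply, ← Fin.eta j j.isLt, ← extend_val_lt a' j.isLt]
  exact h.symm

lemma aux_term (x y uu vv : F) (hvv : vv ≠ 0) : (vv * x) * ((uu / vv) * y) = uu * (x * y) := by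
  field_simp

end TGRSAux

/-- for a TGRS code with `a := Σ α_i = 0` and `η ≠ 0`, the dual code
is the evaluation code of the twisted polynomials
`g(x) = Σ_{j<n-k} b_j x^j - η b_{n-k-1} x^{n-k}` with multipliers `u_i / v_i`. -/
theorem tgrs_dual_case_a_eq_zero (F : Type*) [Field F] [Fintype F] (n k : ℕ)
    (hk : 1 ≤ k) (hkn : k ≤ n - k)
    (α v : Fin n → F) (hα : Function.Injective α) (hv : ∀ i, v i ≠ 0)
    (η : F) (hη : η ≠ 0)
    (u : Fin n → F) (hu : ∀ i, u i = ∏ j ∈ Finset.univ.erase i, (α i - α j)⁻¹)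
    (ha : ∑ i, α i = 0) :
    dualCode (TGRSCode F n k α v η) =
      {x : Fin n → F | ∃ b : ℕ → F, x = fun i =>
        (u i / v i) * ((∑ j ∈ Finset.range (n - k), b j * α i ^ j)
          - η * b (n - k - 1) * α i ^ (n - k))} := by
  classical
  open TGRSAux in
  obtain rfl : u = fun i => ∏ j ∈ Finset.univ.erase i, (α i - α j)⁻¹ := funext hu
  set m := n - k with hm
  have hm1 : 1 ≤ m := hk.trans hkn
  have hkm : k + m = n := by omega
  have hn : 0 < n := by omega
  have hkltn : k < n := by omega
  have hmltn : m < n := by omega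
  set w : Fin n → F := fun i => (∏ j ∈ Finset.univ.erase i, (α i - α j)⁻¹) / v i with hw
  have hwne : ∀ i, w i ≠ 0 := fun i =>
    div_ne_zero (u_ne_zero α hα i) (hv i)
  set Cm : Submodule F (Fin n → F) := LinearMap.range (enc k η α v) with hCm
  set Dm : Submodule F (Fin n → F) := LinearMap.range (enc m (-η) α w) with hDm
  -- the TGRS code is the range of `enc k η α v`
  have hCset : TGRSCode F n k α v η = ↑Cm := by
    ext c
    simp only [TGRSCode, Set.mem_setOf_eq, SetLike.mem_coe, hCm, LinearMap.mem_range]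
    constructor
    · rintro ⟨a, rfl⟩
      refine ⟨fun j => a j.val, funext fun i => ?_⟩
      rw [enc_apply, eval_tw]
      congr 2
      · exact Finset.sum_congr rfl fun j hj => by
          rw [extend_val_lt _ (Finset.mem_range.mp hj)]
      · rw [extend_val_lt _ (by omega : k - 1 < k)]
    · rintro ⟨a', rfl⟩
      refine ⟨Function.extend Fin.val a' 0, funext fun i => ?_⟩
      rw [enc_apply, eval_tw]
  -- the target set is the range of `enc m (-η) α w`
  have hDset : {x : Fin n → F | ∃ b : ℕ → F, x = fun i =>
      (w i) * ((∑ j ∈ Finset.range m, b j * α i ^ j)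
        - η * b (m - 1) * α i ^ m)} = ↑Dm := by
    ext x
    simp only [Set.mem_setOf_eq, SetLike.mem_coe, hDm, LinearMap.mem_range]
    constructor
    · rintro ⟨b, rfl⟩
      refine ⟨fun j => b j.val, funext fun i => ?_⟩
      rw [enc_apply, eval_tw]
      have h1 : ∀ j ∈ Finset.range m, Function.extend Fin.val (fun j : Fin m => b j.val) 0 j * α i ^ j
          = b j * α i ^ j := fun j hj => by
        rw [extend_val_lt _ (Finset.mem_range.mp hj)]
      rw [Finset.sum_congr rfl h1, extend_val_lt _ (by omega : m - 1 < m)]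
      ring
    · rintro ⟨b', rfl⟩
      refine ⟨Function.extend Fin.val b' 0, funext fun i => ?_⟩
      rw [enc_apply, eval_tw]
      ring
  -- the dual code is the orthogonal complement of `Cm`
  have hdual : dualCode (↑Cm) = (((dotB F n).orthogonal Cm : Submodule F (Fin n → F)) : Set (Fin n → F)) := by
    ext x
    simp only [dualCode, Set.mem_setOf_eq, SetLike.mem_coe,
      LinearMap.BilinForm.mem_orthogonal_iff]
    constructor
    · intro h c hc
      show dotB F n c x = 0
      rw [dotB_apply, ← h c hc]
      exact Finset.sum_congr rfl fun i _ => mul_comm _ _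
    · intro h c hc
      have h2 : dotB F n c x = 0 := h c hc
      rw [dotB_apply] at h2
      rw [← h2]
      exact Finset.sum_congr rfl fun i _ => mul_comm _ _
  -- `Dm` is contained in the orthogonal complement
  have hle : Dm ≤ (dotB F n).orthogonal Cm := by
    rintro x ⟨b', rfl⟩
    rw [LinearMap.BilinForm.mem_orthogonal_iff]
    rintro c ⟨a', rfl⟩
    show dotB F n _ _ = 0
    rw [dotB_apply]
    have hterm : ∀ i, enc k η α v a' i * enc m (-η) α w b' i =
        (∏ j ∈ Finset.univ.erase i, (α i - α j)⁻¹) *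
          ((tw k η (Function.extend Fin.val a' 0)).eval (α i) *
           (tw m (-η) (Function.extend Fin.val b' 0)).eval (α i)) := fun i => by
      rw [enc_apply, enc_apply, hw]
      exact aux_term _ _ _ _ (hv i)
    rw [Finset.sum_congr rfl fun i _ => hterm i]
    exact pairing hn α hα ha hk hm1 hkm η _ _
  -- dimension count
  have hfinC : Module.finrank F Cm = k := by
    rw [hCm, LinearMap.finrank_range_of_inj (enc_injective α v hα hv η hkltn),
      Module.finrank_fin_fun]
  have hfinD : Module.finrank F Dm = m := by
    rw [hDm, LinearMap.finrank_range_of_inj (enc_injective α w hα hwne (-η) hmltn),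
      Module.finrank_fin_fun]
  have hfinO : Module.finrank F ((dotB F n).orthogonal Cm) = m := by
    rw [LinearMap.BilinForm.finrank_orthogonal dotB_nondegenerate Cm,
      hfinC, Module.finrank_fin_fun]
  have heq : Dm = (dotB F n).orthogonal Cm :=
    Submodule.eq_of_le_of_finrank_eq hle (by rw [hfinD, hfinO])
  rw [hCset, hdual, ← heq, ← hDset]
end
end

section
/- Let F be a finite field and C_k(α,v,η) a TGRS code of length n and dimension k with 1 ≤ k ≤ n−k. Then C_k(α,v,η) is an MDS code (i.e., its minimum Hamming distance equals n−k+1) if and only if −η^{−1} ∉ S_k, where S_k := { Σ_{i∈I} α_i : I ⊆ {1,…,n}, |I| = k }. -/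
open Finset Polynomial

noncomputable section

namespace TGRSAux
variable {F : Type*} [Field F]
open scoped Classical

/-- The monic polynomial with root multiset `m`. -/
def Pm (m : Multiset F) : Polynomial F := (m.map (fun r => X - C r)).prod

lemma Pm_monic (m : Multiset F) : (Pm m).Monic :=
  monic_multiset_prod_of_monic _ _ (fun r _ => monic_X_sub_C r)

lemma Pm_natDegree (m : Multiset F) : (Pm m).natDegree = Multiset.card m :=
  natDegree_multiset_prod_X_sub_C_eq_card m

lemma Pm_coeff_pred (m : Multiset F) (hm : 0 < Multiset.card m) :
    (Pm m).coeff (Multiset.card m - 1) = -m.sum :=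
  multiset_prod_X_sub_C_coeff_card_pred m hm

lemma Pm_coeff_top (m : Multiset F) : (Pm m).coeff (Multiset.card m) = 1 := by
  have h := (Pm_monic m).coeff_natDegree
  rwa [Pm_natDegree] at h

lemma Pm_eval_eq_zero_iff (m : Multiset F) (x : F) : (Pm m).eval x = 0 ↔ x ∈ m := by
  have hr : (Pm m).roots = m := roots_multiset_prod_X_sub_C m
  have h := mem_roots (p := Pm m) (a := x) (Pm_monic m).ne_zero
  rw [hr] at h
  exact h.symm

/-- Membership in the TGRS code in terms of polynomials. -/
lemma mem_TGRS_iff {n k : ℕ} (hk : 1 ≤ k) (α v : Fin n → F) (η : F) (c : Fin n → F) :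
    c ∈ TGRSCode F n k α v η ↔
      ∃ p : Polynomial F, p.natDegree ≤ k ∧ p.coeff k = η * p.coeff (k-1) ∧
        c = fun i => v i * p.eval (α i) := by
  constructor
  · rintro ⟨a, rfl⟩
    refine ⟨(∑ j ∈ Finset.range k, C (a j) * X ^ j) + C (η * a (k-1)) * X ^ k, ?_, ?_, ?_⟩
    case _ =>
      rw [natDegree_le_iff_coeff_eq_zero]
      intro m hm
      simp only [coeff_add, finset_sum_coeff, coeff_C_mul, coeff_X_pow, mul_ite, mul_one,
        mul_zero, Finset.sum_ite_eq, Finset.mem_range]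
      have h1 : ¬ m < k := by omega
      have h2 : ¬ m = k := by omega
      simp [h1, h2]
    case _ =>
      simp only [coeff_add, finset_sum_coeff, coeff_C_mul, coeff_X_pow, mul_ite, mul_one,
        mul_zero, Finset.sum_ite_eq, Finset.mem_range]
      have h1 : ¬ k < k := by omega
      have h2 : k - 1 < k := by omega
      have h3 : ¬ (k - 1 = k) := by omega
      simp [h1, h2, h3]
    case _ =>
      funext i
      simp only [eval_add, eval_finset_sum, eval_mul, eval_C, eval_pow, eval_X]
  · rintro ⟨p, hdeg, hcoe, rfl⟩
    refine ⟨fun j => p.coeff j, ?_⟩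
    funext i
    have hev : p.eval (α i) = ∑ j ∈ Finset.range (k+1), p.coeff j * α i ^ j :=
      eval_eq_sum_range' (lt_of_le_of_lt hdeg (Nat.lt_succ_self k)) _
    rw [hev, Finset.sum_range_succ, hcoe]

/-- The weight of a codeword in terms of the number of zeros. -/
lemma hwt_eq_card {n : ℕ} (v g : Fin n → F) (hv : ∀ i, v i ≠ 0) :
    hwt (fun i => v i * g i) = n - (Finset.univ.filter fun i => g i = 0).card := by
  have hset : {i | v i * g i ≠ 0} = ↑(Finset.univ.filter fun i => ¬ g i = 0) := by
    ext i
    simp [mul_ne_zero_iff, hv i]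
  rw [hwt, hset, Set.ncard_coe_finset]
  have h := Finset.card_filter_add_card_filter_not
    (s := (Finset.univ : Finset (Fin n))) (p := fun i => g i = 0)
  simp only [Finset.card_univ, Fintype.card_fin] at h
  omega

/-- Key step: if a twisted polynomial vanishes on `k` of the evaluation points,
then the corresponding sum of evaluation points is `-η⁻¹`. -/
lemma key_s3 {n k : ℕ} (hk : 1 ≤ k) {α : Fin n → F} (hα : Function.Injective α)
    {η : F} (hη : η ≠ 0) {p : Polynomial F} (hp : p ≠ 0) (hdeg : p.natDegree ≤ k)
    (hcoe : p.coeff k = η * p.coeff (k-1))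
    {I : Finset (Fin n)} (hI : I.card = k) (hz : ∀ i ∈ I, p.eval (α i) = 0) :
    ∑ i ∈ I, α i = -η⁻¹ := by
  have hcardim : (I.image α).card = k := by rw [Finset.card_image_of_injective _ hα, hI]
  have hevals : ∀ x ∈ I.image α, p.eval x = 0 := by
    intro x hx; obtain ⟨i, hi, rfl⟩ := Finset.mem_image.mp hx; exact hz i hi
  by_cases ha0 : p.coeff (k-1) = 0
  · exfalso
    have hck : p.coeff k = 0 := by rw [hcoe, ha0, mul_zero]
    have hdlt : p.natDegree < k := by
      rcases lt_or_eq_of_le hdeg with h | h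
      · exact h
      · exact absurd (by rw [← leadingCoeff_eq_zero, leadingCoeff, h]; exact hck) hp
    exact hp (eq_zero_of_natDegree_lt_card_of_eval_eq_zero' p (I.image α) hevals (by omega))
  · set a := p.coeff (k-1) with ha
    set m : Multiset F := I.1.map α with hm
    have hmc : Multiset.card m = k := by rw [hm]; simp [hI]
    set g := Pm m with hg
    have hgdeg : g.natDegree = k := by rw [hg, Pm_natDegree, hmc]
    have hgk : g.coeff k = 1 := by rw [hg, ← hmc]; exact Pm_coeff_top m
    set q := p - C (η * a) * g with hq
    have hqk : q.coeff k = 0 := by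
      rw [hq, coeff_sub, coeff_C_mul, hcoe, hgk, mul_one, sub_self]
    have hqdeg : q.natDegree ≤ k := by
      refine le_trans (natDegree_sub_le _ _) (max_le hdeg ?_)
      exact le_trans (natDegree_C_mul_le _ _) (le_of_eq hgdeg)
    have hqz : ∀ x ∈ I.image α, q.eval x = 0 := by
      intro x hx
      have h1 := hevals x hx
      have h2 : g.eval x = 0 := by
        rw [hg, Pm_eval_eq_zero_iff, hm]
        obtain ⟨i, hi, rfl⟩ := Finset.mem_image.mp hx
        exact Multiset.mem_map_of_mem α hi
      simp [hq, h1, h2]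
    have hq0 : q = 0 := by
      by_contra hq0
      have hlt : q.natDegree < k := by
        rcases lt_or_eq_of_le hqdeg with h | h
        · exact h
        · exact absurd (by rw [← leadingCoeff_eq_zero, leadingCoeff, h]; exact hqk) hq0
      exact hq0 (eq_zero_of_natDegree_lt_card_of_eval_eq_zero' q (I.image α) hqz (by omega))
    have hpeq : p = C (η * a) * g := sub_eq_zero.mp hq0
    have hgc : g.coeff (k-1) = -(∑ i ∈ I, α i) := by
      have hpred := Pm_coeff_pred m (by omega)
      rw [hmc] at hpred
      rw [hg, hpred, hm, Finset.sum]
    have hac : a = η * a * -(∑ i ∈ I, α i) := by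
      rw [ha]
      conv_lhs => rw [hpeq]
      rw [coeff_C_mul, hgc]
    have h2 : a * (1 + η * (∑ i ∈ I, α i)) = 0 := by linear_combination hac
    have h3 : 1 + η * (∑ i ∈ I, α i) = 0 := by
      rcases mul_eq_zero.mp h2 with h | h
      · exact absurd h ha0
      · exact h
    field_simp
    linear_combination h3

end TGRSAux

/-- a TGRS code is MDS (minimum distance `n - k + 1`) iff
`-η⁻¹ ∉ S_k = { Σ_{i ∈ I} α_i : |I| = k }`. -/
theorem tgrs_mds_iff (F : Type*) [Field F] [Fintype F] (n k : ℕ)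
    (hk : 1 ≤ k) (hkn : k ≤ n - k)
    (α v : Fin n → F) (hα : Function.Injective α) (hv : ∀ i, v i ≠ 0)
    (η : F) (hη : η ≠ 0) :
    IsMinDist (TGRSCode F n k α v η) (n - k + 1) ↔
      -η⁻¹ ∉ {s : F | ∃ I : Finset (Fin n), I.card = k ∧ ∑ i ∈ I, α i = s} := by
  classical
  have h2k : 2 * k ≤ n := by omega
  constructor
  · rintro ⟨-, hlow⟩ hmem
    obtain ⟨I, hIcard, hIsum⟩ := hmem
    set m : Multiset F := I.1.map α with hm
    have hmc : Multiset.card m = k := by simp [hm, hIcard]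
    set p := TGRSAux.Pm m with hp
    have hpdeg : p.natDegree = k := by rw [hp, TGRSAux.Pm_natDegree, hmc]
    have hpk : p.coeff k = 1 := by rw [hp, ← hmc]; exact TGRSAux.Pm_coeff_top m
    have hms : m.sum = -η⁻¹ := by rw [hm]; exact hIsum
    have hpk1 : p.coeff (k-1) = η⁻¹ := by
      have hpred := TGRSAux.Pm_coeff_pred m (by omega)
      rw [hmc] at hpred
      rw [hp, hpred, hms, neg_neg]
    have hc : (fun i => v i * p.eval (α i)) ∈ TGRSCode F n k α v η := by
      rw [TGRSAux.mem_TGRS_iff hk]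
      exact ⟨p, le_of_eq hpdeg, by rw [hpk, hpk1, mul_inv_cancel₀ hη], rfl⟩
    have hfilter : (Finset.univ.filter fun i => p.eval (α i) = 0) = I := by
      ext i
      simp only [Finset.mem_filter, Finset.mem_univ, true_and]
      rw [hp, TGRSAux.Pm_eval_eq_zero_iff, hm]
      constructor
      · intro h
        obtain ⟨j, hj, hji⟩ := Multiset.mem_map.mp h
        rwa [← hα hji]
      · intro h; exact Multiset.mem_map_of_mem α h
    have hwt1 : hwt (fun i => v i * p.eval (α i)) =
        n - (Finset.univ.filter fun i => p.eval (α i) = 0).card :=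
      TGRSAux.hwt_eq_card v (fun i => p.eval (α i)) hv
    rw [hfilter, hIcard] at hwt1
    have hne : (fun i => v i * p.eval (α i)) ≠ 0 := by
      have hIcompl : (Iᶜ : Finset (Fin n)).Nonempty := by
        rw [← Finset.card_pos, Finset.card_compl, hIcard]
        simp only [Fintype.card_fin]
        omega
      obtain ⟨i, hi⟩ := hIcompl
      rw [Finset.mem_compl] at hi
      have hev : p.eval (α i) ≠ 0 := by
        intro h
        exact hi (hfilter ▸ Finset.mem_filter.mpr ⟨Finset.mem_univ i, h⟩)
      intro h0
      have hfi := congrFun h0 i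
      simp only [Pi.zero_apply] at hfi
      rcases mul_eq_zero.mp hfi with h | h
      · exact hv i h
      · exact hev h
    have hlb := hlow _ hc hne
    rw [hwt1] at hlb
    omega
  · intro hmem
    constructor
    · -- a codeword of weight exactly n - k + 1
      obtain ⟨I, -, hIcard⟩ := Finset.exists_subset_card_eq
        (s := (Finset.univ : Finset (Fin n))) (n := k-1)
        (by simp only [Finset.card_univ, Fintype.card_fin]; omega)
      set w : F := η⁻¹ + ∑ i ∈ I, α i with hw
      set m : Multiset F := (-w) ::ₘ I.1.map α with hm
      have hmc : Multiset.card m = k := by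
        rw [hm]; simp only [Multiset.card_cons, Multiset.card_map]
        have : Multiset.card I.1 = k - 1 := hIcard
        omega
      set p := TGRSAux.Pm m with hp
      have hpdeg : p.natDegree = k := by rw [hp, TGRSAux.Pm_natDegree, hmc]
      have hpk : p.coeff k = 1 := by rw [hp, ← hmc]; exact TGRSAux.Pm_coeff_top m
      have hms : m.sum = -w + ∑ i ∈ I, α i := by
        rw [hm, Multiset.sum_cons, Finset.sum]
      have hpk1 : p.coeff (k-1) = η⁻¹ := by
        have hpred := TGRSAux.Pm_coeff_pred m (by omega)
        rw [hmc] at hpred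
        rw [hp, hpred, hms, hw]
        ring
      have hc : (fun i => v i * p.eval (α i)) ∈ TGRSCode F n k α v η := by
        rw [TGRSAux.mem_TGRS_iff hk]
        exact ⟨p, le_of_eq hpdeg, by rw [hpk, hpk1, mul_inv_cancel₀ hη], rfl⟩
      have hfilter : (Finset.univ.filter fun i => p.eval (α i) = 0) = I := by
        ext i
        simp only [Finset.mem_filter, Finset.mem_univ, true_and]
        rw [hp, TGRSAux.Pm_eval_eq_zero_iff, hm, Multiset.mem_cons]
        constructor
        · rintro (h | h)
          · by_contra hiI
            apply hmem
            refine ⟨insert i I, ?_, ?_⟩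
            · rw [Finset.card_insert_of_notMem hiI, hIcard]; omega
            · rw [Finset.sum_insert hiI, h, hw]; ring
          · obtain ⟨j, hj, hji⟩ := Multiset.mem_map.mp h
            rwa [← hα hji]
        · intro h; exact Or.inr (Multiset.mem_map_of_mem α h)
      have hwt1 : hwt (fun i => v i * p.eval (α i)) =
          n - (Finset.univ.filter fun i => p.eval (α i) = 0).card :=
        TGRSAux.hwt_eq_card v (fun i => p.eval (α i)) hv
      rw [hfilter, hIcard] at hwt1
      have hne : (fun i => v i * p.eval (α i)) ≠ 0 := by
        have hIcompl : (Iᶜ : Finset (Fin n)).Nonempty := by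
          rw [← Finset.card_pos, Finset.card_compl, hIcard]
          simp only [Fintype.card_fin]
          omega
        obtain ⟨i, hi⟩ := hIcompl
        rw [Finset.mem_compl] at hi
        have hev : p.eval (α i) ≠ 0 := by
          intro h
          exact hi (hfilter ▸ Finset.mem_filter.mpr ⟨Finset.mem_univ i, h⟩)
        intro h0
        have hfi := congrFun h0 i
        simp only [Pi.zero_apply] at hfi
        rcases mul_eq_zero.mp hfi with h | h
        · exact hv i h
        · exact hev h
      exact ⟨_, hc, hne, by rw [hwt1]; omega⟩
    · -- the lower bound on the weight of every nonzero codeword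
      intro c hc hcne
      obtain ⟨p, hdeg, hcoe, rfl⟩ := (TGRSAux.mem_TGRS_iff hk α v η c).mp hc
      have hp0 : p ≠ 0 := by
        rintro rfl
        apply hcne
        funext i
        simp
      set Z := Finset.univ.filter fun i => p.eval (α i) = 0 with hZ
      have hZle : Z.card ≤ k - 1 := by
        by_contra hlt
        push_neg at hlt
        obtain ⟨I, hIsub, hIcard⟩ := Finset.exists_subset_card_eq (s := Z) (n := k) (by omega)
        have hzz : ∀ i ∈ I, p.eval (α i) = 0 := fun i hi =>
          (Finset.mem_filter.mp (hIsub hi)).2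
        exact hmem ⟨I, hIcard, TGRSAux.key_s3 hk hα hη hp0 hdeg hcoe hIcard hzz⟩
      have hwt1 : hwt (fun i => v i * p.eval (α i)) = n - Z.card :=
        TGRSAux.hwt_eq_card v (fun i => p.eval (α i)) hv
      rw [hwt1]
      omega
end
end

section
/- Let F be a finite field of odd characteristic, n = 2k with k ≥ 3, and C_k(α,v,η) a TGRS code of length n and dimension k. Set u_i := ∏_{j≠i}(α_i − α_j)^{−1} and a := Σ_{i=1}^n α_i, and suppose a ≠ 0 and η ≠ −a^{−1}. Then C_k(α,v,η) is self-dual if and only if both of the following hold: (1) there exists λ ∈ F\{0} such that v_i² = λ·u_i for all 1 ≤ i ≤ n; (2) 2 + aη = 0. -/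
open Finset Polynomial

section TGRSHelpers

variable {F : Type*} [Field F]

variable {F : Type*} [Field F]

lemma coeff_pred_eq_sum_nodalWeight {n : ℕ} (α : Fin n → F)
    (hα : Function.Injective α) (p : Polynomial F) (hp : p.degree < (n : ℕ)) :
    p.coeff (n - 1) = ∑ i, (∏ j ∈ Finset.univ.erase i, (α i - α j)⁻¹) * p.eval (α i) := by
  have hinj : Set.InjOn α (Finset.univ : Finset (Fin n)) := fun x _ y _ h => hα h
  have hcard : #(Finset.univ : Finset (Fin n)) = n := by simp
  have hp' : p.degree < (#(Finset.univ : Finset (Fin n)) : ℕ) := by rwa [hcard]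
  have hrep := Lagrange.eq_interpolate hinj hp'
  conv_lhs => rw [hrep]
  rw [Lagrange.interpolate_apply, Polynomial.finset_sum_coeff]
  refine Finset.sum_congr rfl fun i _ => ?_
  have hbasis : Lagrange.basis Finset.univ α i
      = Polynomial.C (∏ j ∈ Finset.univ.erase i, (α i - α j)⁻¹)
        * Lagrange.nodal (Finset.univ.erase i) α := by
    simp_rw [Lagrange.basis, Lagrange.basisDivisor, Lagrange.nodal,
      Finset.prod_mul_distrib, map_prod]
  have hmonic : (Lagrange.nodal (Finset.univ.erase i) α).Monic := Lagrange.nodal_monic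
  have hdeg : (Lagrange.nodal (Finset.univ.erase i) α).natDegree = n - 1 := by
    rw [Lagrange.natDegree_nodal, Finset.card_erase_of_mem (Finset.mem_univ i), hcard]
  rw [hbasis, Polynomial.coeff_C_mul, Polynomial.coeff_C_mul, ← hdeg,
    hmonic.coeff_natDegree, mul_one, mul_comm]

lemma sum_nodalWeight_pow {n : ℕ} (α : Fin n → F) (hα : Function.Injective α)
    {m : ℕ} (hm : m < n) :
    ∑ i, (∏ j ∈ Finset.univ.erase i, (α i - α j)⁻¹) * α i ^ m
      = if m = n - 1 then 1 else 0 := by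
  have hdeg : (Polynomial.X ^ m : Polynomial F).degree < (n : ℕ) := by
    rw [Polynomial.degree_X_pow]
    exact_mod_cast hm
  have h := coeff_pred_eq_sum_nodalWeight α hα (Polynomial.X ^ m) hdeg
  simp only [Polynomial.eval_pow, Polynomial.eval_X] at h
  rw [← h, Polynomial.coeff_X_pow]
  by_cases hc : m = n - 1 <;> simp [hc, eq_comm]

lemma sum_nodalWeight_pow_self {n : ℕ} (hn : 0 < n) (α : Fin n → F)
    (hα : Function.Injective α) :
    ∑ i, (∏ j ∈ Finset.univ.erase i, (α i - α j)⁻¹) * α i ^ n = ∑ i, α i := by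
  have hcard : #(Finset.univ : Finset (Fin n)) = n := by simp
  set q : Polynomial F := Lagrange.nodal Finset.univ α with hq
  have hqmonic : q.Monic := Lagrange.nodal_monic
  have hqdeg : q.degree = (n : ℕ) := by rw [hq, Lagrange.degree_nodal, hcard]
  set p : Polynomial F := Polynomial.X ^ n - q with hpdef
  have hpdeg : p.degree < (n : ℕ) := by
    rw [hpdef]
    have := Polynomial.degree_sub_lt (p := (Polynomial.X : Polynomial F) ^ n) (q := q)
      (by rw [Polynomial.degree_X_pow, hqdeg])
      (pow_ne_zero n Polynomial.X_ne_zero)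
      (by rw [Polynomial.leadingCoeff_X_pow, hqmonic.leadingCoeff])
    rwa [Polynomial.degree_X_pow] at this
  have h := coeff_pred_eq_sum_nodalWeight α hα p hpdeg
  have heval : ∀ i : Fin n, p.eval (α i) = α i ^ n := by
    intro i
    rw [hpdef, Polynomial.eval_sub, Polynomial.eval_pow, Polynomial.eval_X, hq,
      Lagrange.eval_nodal_at_node (Finset.mem_univ i), sub_zero]
  have hcoeff : p.coeff (n - 1) = ∑ i, α i := by
    rw [hpdef, Polynomial.coeff_sub, Polynomial.coeff_X_pow, if_neg (by omega), hq,
      Lagrange.nodal_eq]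
    have := Polynomial.prod_X_sub_C_coeff_card_pred (Finset.univ : Finset (Fin n)) α
      (by rwa [hcard])
    rw [hcard] at this
    rw [this]
    ring
  rw [← hcoeff, h]
  exact Finset.sum_congr rfl fun i _ => by rw [heval i]

lemma eq_zero_of_moments {n : ℕ} (α : Fin n → F) (hα : Function.Injective α) (w : Fin n → F)
    (h : ∀ m : ℕ, m < n → ∑ i, w i * α i ^ m = 0) : w = 0 := by
  have hdet : ((Matrix.vandermonde α).transpose).det ≠ 0 := by
    rw [Matrix.det_transpose]
    exact Matrix.det_vandermonde_ne_zero_iff.mpr hα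
  refine Matrix.eq_zero_of_mulVec_eq_zero hdet ?_
  funext m
  have := h (m : ℕ) m.isLt
  simpa [Matrix.mulVec, dotProduct, Matrix.vandermonde, mul_comm] using this

end TGRSHelpers

noncomputable section

/-- for `n = 2k`, `k ≥ 3`, `a := Σ α_i ≠ 0` and `η ≠ -a⁻¹`, the TGRS code
is self-dual iff (1) there is `λ ≠ 0` with `v_i² = λ u_i` for all `i`, and
(2) `2 + aη = 0`. -/
theorem tgrs_selfdual_iff (F : Type*) [Field F] [Fintype F] (hchar : ringChar F ≠ 2)
    (n k : ℕ) (hk : 3 ≤ k) (hn : n = 2 * k)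
    (α v : Fin n → F) (hα : Function.Injective α) (hv : ∀ i, v i ≠ 0)
    (η : F) (hη : η ≠ 0)
    (u : Fin n → F) (hu : ∀ i, u i = ∏ j ∈ Finset.univ.erase i, (α i - α j)⁻¹)
    (a : F) (ha : a = ∑ i, α i) (ha0 : a ≠ 0) (hηa : η ≠ -a⁻¹) :
    IsSelfDual (TGRSCode F n k α v η) ↔
      ((∃ lam : F, lam ≠ 0 ∧ ∀ i, v i ^ 2 = lam * u i) ∧ 2 + a * η = 0) := by
  classical
  subst hn
  have hk1 : k - 1 < k := by omega
  have hkn : k < 2 * k := by omega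
  have hn0 : 0 < 2 * k := by omega
  set K : Fin k := ⟨k - 1, hk1⟩ with hK
  set W : ℕ → F := fun m => ∑ i, v i ^ 2 * α i ^ m with hWdef
  set M : Matrix (Fin k) (Fin (2 * k)) F :=
    Matrix.of (fun j i => v i * (α i ^ (j : ℕ) + if (j : ℕ) = k - 1 then η * α i ^ k else 0))
    with hM
  have hcond : ∀ j : Fin k, ((j : ℕ) = k - 1) = (j = K) := by
    intro j; rw [hK]; simp [Fin.ext_iff]
  -- φ applied
  have hφ : ∀ (b : Fin k → F) (i : Fin (2 * k)),
      M.transpose.mulVec b i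
        = v i * ((∑ j : Fin k, b j * α i ^ (j : ℕ)) + η * b K * α i ^ k) := by
    intro b i
    simp only [Matrix.mulVec, dotProduct, Matrix.transpose_apply, hM, Matrix.of_apply]
    have step : ∀ j : Fin k,
        v i * (α i ^ (j : ℕ) + if (j : ℕ) = k - 1 then η * α i ^ k else 0) * b j
          = v i * (α i ^ (j : ℕ)) * b j
            + (if j = K then v i * (η * α i ^ k) * b j else 0) := by
      intro j
      simp only [hcond]
      by_cases hj : j = K <;> simp [hj] <;> ring
    rw [Finset.sum_congr rfl fun j _ => step j, Finset.sum_add_distrib,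
      Finset.sum_ite_eq' Finset.univ K
        (fun j => v i * (η * α i ^ k) * b j), if_pos (Finset.mem_univ K),
      mul_add, Finset.mul_sum]
    congr 1
    · exact Finset.sum_congr rfl fun j _ => by ring
    · ring
  -- the code is the range of Mᵀ
  have hC : TGRSCode F (2 * k) k α v η
      = ↑(LinearMap.range (M.transpose.mulVecLin)) := by
    ext c
    constructor
    · rintro ⟨coefs, rfl⟩
      refine ⟨fun j => coefs (j : ℕ), ?_⟩
      funext i
      rw [Matrix.mulVecLin_apply, hφ]
      congr 2
      · rw [Fin.sum_univ_eq_sum_range (fun j => coefs j * α i ^ j) k]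
    · rintro ⟨b, rfl⟩
      set aa : ℕ → F := fun m => if h : m < k then b ⟨m, h⟩ else 0 with haa
      have e2 : aa (k - 1) = b K := by simp only [haa]; rw [dif_pos hk1]
      have e1 : ∀ i : Fin (2 * k), ∑ j ∈ Finset.range k, aa j * α i ^ j
          = ∑ j : Fin k, b j * α i ^ (j : ℕ) := by
        intro i
        rw [← Fin.sum_univ_eq_sum_range (fun m => aa m * α i ^ m) k]
        refine Finset.sum_congr rfl fun j _ => ?_
        simp only [haa]
        rw [dif_pos j.isLt]
      refine ⟨aa, ?_⟩
      funext i
      rw [Matrix.mulVecLin_apply, hφ, e1 i, e2]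
  -- injectivity of φ
  have hφinj : Function.Injective (M.transpose.mulVecLin) := by
    refine (injective_iff_map_eq_zero _).mpr ?_
    intro b hb
    set c : Fin (2 * k) → F := fun m =>
      (if h : (m : ℕ) < k then b ⟨m, h⟩ else 0)
        + (if (m : ℕ) = k then η * b K else 0) with hc
    have hsum : ∀ i : Fin (2 * k), ∑ m : Fin (2 * k), α i ^ (m : ℕ) * c m = 0 := by
      intro i
      have h0 : v i * ((∑ j : Fin k, b j * α i ^ (j : ℕ)) + η * b K * α i ^ k) = 0 := by
        rw [← hφ b i]
        have : M.transpose.mulVec b = 0 := by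
          rw [← Matrix.mulVecLin_apply, hb]
        rw [this, Pi.zero_apply]
      have h0' : (∑ j : Fin k, b j * α i ^ (j : ℕ)) + η * b K * α i ^ k = 0 :=
        (mul_eq_zero.mp h0).resolve_left (hv i)
      set f : ℕ → F := fun m => α i ^ m * (if h : m < k then b ⟨m, h⟩ else 0) with hf
      set g : ℕ → F := fun m => α i ^ m * (if m = k then η * b K else 0) with hg
      have expand : ∑ m : Fin (2 * k), α i ^ (m : ℕ) * c m
          = (∑ j : Fin k, b j * α i ^ (j : ℕ)) + η * b K * α i ^ k := by
        have hsplit : ∀ m : Fin (2 * k), α i ^ (m : ℕ) * c m = f (m : ℕ) + g (m : ℕ) := by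
          intro m
          simp only [hc, hf, hg, mul_add]
        rw [Finset.sum_congr rfl fun m _ => hsplit m, Finset.sum_add_distrib]
        congr 1
        · rw [Fin.sum_univ_eq_sum_range f (2 * k),
            ← Finset.sum_subset (Finset.range_subset_range.mpr hkn.le)
              (fun x _ hx => by
                simp only [hf]
                rw [dif_neg (by simpa using hx), mul_zero]),
            ← Fin.sum_univ_eq_sum_range f k]
          refine Finset.sum_congr rfl fun j _ => ?_
          simp only [hf]
          rw [dif_pos j.isLt, Fin.eta, mul_comm]
        · rw [Fin.sum_univ_eq_sum_range g (2 * k)]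
          simp only [hg, mul_ite, mul_zero]
          rw [Finset.sum_ite_eq' (Finset.range (2 * k)) k
            (fun m => α i ^ m * (η * b K)), if_pos (Finset.mem_range.mpr hkn)]
          ring
      rw [expand, h0']
    have hc0 : c = 0 := by
      refine Matrix.eq_zero_of_mulVec_eq_zero
        (Matrix.det_vandermonde_ne_zero_iff.mpr hα) ?_
      funext i
      simpa [Matrix.mulVec, dotProduct, Matrix.vandermonde] using hsum i
    funext j
    have hcj := congrFun hc0 ⟨(j : ℕ), lt_trans j.isLt hkn⟩
    simp only [hc, Pi.zero_apply] at hcj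
    rw [dif_pos j.isLt, if_neg (Nat.ne_of_lt j.isLt), add_zero, Fin.eta] at hcj
    exact hcj
  -- rank and kernel dimension facts
  have hrange_k : Module.finrank F (LinearMap.range (M.transpose.mulVecLin)) = k := by
    rw [LinearMap.finrank_range_of_inj hφinj, Module.finrank_pi, Fintype.card_fin]
  have hMTrank : M.transpose.rank = k := hrange_k
  have hMrank : M.rank = k := by rw [← Matrix.rank_transpose M]; exact hMTrank
  have hψsurj : LinearMap.range M.mulVecLin = ⊤ := by
    apply Submodule.eq_top_of_finrank_eq
    rw [Module.finrank_pi, Fintype.card_fin]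
    exact hMrank
  have hker_k : Module.finrank F (LinearMap.ker M.mulVecLin) = k := by
    have h := LinearMap.finrank_range_add_finrank_ker M.mulVecLin
    rw [hψsurj, finrank_top, Module.finrank_pi, Fintype.card_fin,
      Module.finrank_pi, Fintype.card_fin] at h
    omega
  -- dual code is the kernel of ψ
  have hψker : ∀ x : Fin (2 * k) → F,
      x ∈ dualCode (TGRSCode F (2 * k) k α v η) ↔ M.mulVecLin x = 0 := by
    intro x
    have hdp : ∀ b : Fin k → F,
        ∑ i, x i * M.transpose.mulVecLin b i
          = dotProduct (M.mulVec x) b := by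
      intro b
      have : ∑ i, x i * M.transpose.mulVecLin b i
          = dotProduct x (M.transpose.mulVec b) := by
        rw [dotProduct]
        exact Finset.sum_congr rfl fun i _ => by rw [Matrix.mulVecLin_apply]
      rw [this, Matrix.dotProduct_mulVec, Matrix.vecMul_transpose]
    constructor
    · intro hx
      funext j
      have hmem : M.transpose.mulVecLin (Pi.single j 1)
          ∈ TGRSCode F (2 * k) k α v η := by
        rw [hC]; exact ⟨Pi.single j 1, rfl⟩
      have := hx _ hmem
      rw [hdp, dotProduct_single, mul_one] at this
      rw [← Matrix.mulVecLin_apply] at this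
      exact this
    · intro hx c hcmem
      rw [hC] at hcmem
      obtain ⟨b, rfl⟩ := hcmem
      rw [hdp]
      have h0 : M.mulVec x = 0 := by rw [← Matrix.mulVecLin_apply]; exact hx
      rw [h0, zero_dotProduct]
  -- Gram identity
  have hGram : ∀ b bb : Fin k → F,
      ∑ i, M.transpose.mulVecLin b i * M.transpose.mulVecLin bb i
        = dotProduct ((M * M.transpose).mulVec b) bb := by
    intro b bb
    have h1 : ∑ i, M.transpose.mulVecLin b i * M.transpose.mulVecLin bb i
        = dotProduct (M.transpose.mulVec b) (M.transpose.mulVec bb) := by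
      rw [dotProduct]
      exact Finset.sum_congr rfl fun i _ => by rw [Matrix.mulVecLin_apply, Matrix.mulVecLin_apply]
    rw [h1, Matrix.dotProduct_mulVec, Matrix.vecMul_transpose, Matrix.mulVec_mulVec]
  have hmem : ∀ bb : Fin k → F,
      M.transpose.mulVecLin bb ∈ TGRSCode F (2 * k) k α v η := by
    intro bb; rw [hC]; exact ⟨bb, rfl⟩
  -- bridge
  have hbridge : IsSelfDual (TGRSCode F (2 * k) k α v η) ↔ M * M.transpose = 0 := by
    constructor
    · intro hsd
      ext j j'
      have hx : M.transpose.mulVecLin (Pi.single j' 1)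
          ∈ dualCode (TGRSCode F (2 * k) k α v η) := by
        rw [← hsd]; exact hmem _
      have h := hx _ (hmem (Pi.single j 1))
      rw [hGram] at h
      simpa [Matrix.mulVec_single, dotProduct_single] using h
    · intro hG
      have hsub : TGRSCode F (2 * k) k α v η
          ⊆ dualCode (TGRSCode F (2 * k) k α v η) := by
        intro x hx
        rw [hC] at hx; obtain ⟨b, rfl⟩ := hx
        intro c hc
        rw [hC] at hc; obtain ⟨bb, rfl⟩ := hc
        rw [hGram, hG, Matrix.zero_mulVec, zero_dotProduct]
      have hle : LinearMap.range (M.transpose.mulVecLin)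
          ≤ LinearMap.ker (M.mulVecLin) := by
        rintro x ⟨b, rfl⟩
        rw [LinearMap.mem_ker, Matrix.mulVecLin_apply, Matrix.mulVecLin_apply,
          Matrix.mulVec_mulVec, hG, Matrix.zero_mulVec]
      have heq : LinearMap.range (M.transpose.mulVecLin)
          = LinearMap.ker (M.mulVecLin) :=
        Submodule.eq_of_le_of_finrank_le hle (by rw [hrange_k, hker_k])
      refine Set.Subset.antisymm hsub ?_
      intro x hx
      rw [hC, SetLike.mem_coe, heq, LinearMap.mem_ker]
      exact (hψker x).mp hx
  -- entry formula for the Gram matrix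
  have key : ∀ (x y : F) (p q : ℕ),
      ∑ i, (v i * (α i ^ p + x * α i ^ k)) * (v i * (α i ^ q + y * α i ^ k))
        = W (p + q) + y * W (p + k) + x * W (q + k) + x * y * W (k + k) := by
    intro x y p q
    simp only [hWdef, Finset.mul_sum]
    rw [← Finset.sum_add_distrib, ← Finset.sum_add_distrib, ← Finset.sum_add_distrib]
    refine Finset.sum_congr rfl fun i _ => ?_
    simp only [pow_add]
    ring
  have hMM : ∀ j j' : Fin k, (M * M.transpose) j j'
      = W ((j : ℕ) + (j' : ℕ))
        + (if (j' : ℕ) = k - 1 then η * W ((j : ℕ) + k) else 0)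
        + (if (j : ℕ) = k - 1 then η * W ((j' : ℕ) + k) else 0)
        + (if (j : ℕ) = k - 1 ∧ (j' : ℕ) = k - 1 then η ^ 2 * W (k + k) else 0) := by
    intro j j'
    rw [Matrix.mul_apply]
    simp only [hM, Matrix.of_apply, Matrix.transpose_apply]
    by_cases hj : (j : ℕ) = k - 1 <;> by_cases hj' : (j' : ℕ) = k - 1
    · simp only [hj, hj', eq_self_iff_true, and_self, if_true]
      rw [key η η (k - 1) (k - 1)]
      ring
    · simp only [hj, hj', eq_self_iff_true, and_false, if_true, if_false, add_zero]
      have hkey := key η 0 (k - 1) (j' : ℕ)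
      simp only [zero_mul, mul_zero, add_zero, zero_add] at hkey
      rw [hkey]
    · simp only [hj, hj', eq_self_iff_true, false_and, if_true, if_false, add_zero]
      have hkey := key 0 η (j : ℕ) (k - 1)
      simp only [zero_mul, mul_zero, add_zero, zero_add] at hkey
      rw [hkey]
    · simp only [hj, hj', and_false, if_false, add_zero]
      have hkey := key 0 0 (j : ℕ) (j' : ℕ)
      simp only [zero_mul, mul_zero, add_zero, zero_add] at hkey
      rw [hkey]
  -- moment facts for u
  have hUlt : ∀ m : ℕ, m < 2 * k →
      ∑ i, u i * α i ^ m = if m = 2 * k - 1 then 1 else 0 := by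
    intro m hm
    simp only [hu]
    exact sum_nodalWeight_pow α hα hm
  have hUtop : ∑ i, u i * α i ^ (2 * k) = a := by
    simp only [hu]
    rw [sum_nodalWeight_pow_self hn0 α hα]
    exact ha.symm
  rw [hbridge]
  constructor
  · intro hG
    have hE : ∀ p q : ℕ, (hp : p < k) → (hq : q < k) →
        W (p + q) + (if q = k - 1 then η * W (p + k) else 0)
          + (if p = k - 1 then η * W (q + k) else 0)
          + (if p = k - 1 ∧ q = k - 1 then η ^ 2 * W (k + k) else 0) = 0 := by
      intro p q hp hq
      have h := hMM ⟨p, hp⟩ ⟨q, hq⟩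
      rw [hG, Matrix.zero_apply] at h
      exact h.symm
    have hE1 : ∀ p q : ℕ, p ≤ k - 2 → q ≤ k - 2 → W (p + q) = 0 := by
      intro p q hp hq
      have h := hE p q (by omega) (by omega)
      rw [if_neg (by omega), if_neg (by omega), if_neg (by omega)] at h
      simpa using h
    have hE2 : ∀ q : ℕ, q ≤ k - 2 → W (k - 1 + q) + η * W (q + k) = 0 := by
      intro q hq
      have h := hE (k - 1) q (by omega) (by omega)
      rw [if_neg (by omega), if_pos rfl, if_neg (by omega)] at h
      simpa using h
    have hE3 : W (k - 1 + (k - 1)) + η * W (k - 1 + k) + η * W (k - 1 + k)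
        + η ^ 2 * W (k + k) = 0 := by
      have h := hE (k - 1) (k - 1) (by omega) (by omega)
      rw [if_pos rfl, if_pos (⟨rfl, rfl⟩ : k - 1 = k - 1 ∧ k - 1 = k - 1)] at h
      linear_combination h
    have hW0 : ∀ m : ℕ, m ≤ 2 * k - 4 → W m = 0 := by
      intro m hm
      by_cases hmk : m ≤ k - 2
      · have h := hE1 m 0 hmk (by omega)
        simpa using h
      · have h := hE1 (k - 2) (m - (k - 2)) (le_refl _) (by omega)
        rwa [show k - 2 + (m - (k - 2)) = m by omega] at h
    have hW3 : W (2 * k - 3) = 0 := by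
      have h := hE2 (k - 3) (by omega)
      rw [show k - 1 + (k - 3) = 2 * k - 4 by omega,
        show k - 3 + k = 2 * k - 3 by omega, hW0 _ (le_refl _), zero_add] at h
      exact (mul_eq_zero.mp h).resolve_left hη
    have hW2 : W (2 * k - 2) = 0 := by
      have h := hE2 (k - 2) (by omega)
      rw [show k - 1 + (k - 2) = 2 * k - 3 by omega,
        show k - 2 + k = 2 * k - 2 by omega, hW3, zero_add] at h
      exact (mul_eq_zero.mp h).resolve_left hη
    have hWlow : ∀ m : ℕ, m ≤ 2 * k - 2 → W m = 0 := by
      intro m hm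
      by_cases h4 : m ≤ 2 * k - 4
      · exact hW0 m h4
      · by_cases h3 : m = 2 * k - 3
        · rw [h3]; exact hW3
        · rw [show m = 2 * k - 2 by omega]; exact hW2
    have hmoment : ∀ m : ℕ, m < 2 * k →
        ∑ i, (v i ^ 2 - W (2 * k - 1) * u i) * α i ^ m = 0 := by
      intro m hm
      have hsplit : ∑ i, (v i ^ 2 - W (2 * k - 1) * u i) * α i ^ m
          = W m - W (2 * k - 1) * ∑ i, u i * α i ^ m := by
        simp only [hWdef, Finset.mul_sum, ← Finset.sum_sub_distrib]
        exact Finset.sum_congr rfl fun i _ => by ring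
      rw [hsplit, hUlt m hm]
      by_cases hm1 : m = 2 * k - 1
      · rw [if_pos hm1, mul_one, hm1, sub_self]
      · rw [if_neg hm1, mul_zero, hWlow m (by omega), sub_zero]
    have hzero := eq_zero_of_moments α hα _ hmoment
    have hvu : ∀ i, v i ^ 2 = W (2 * k - 1) * u i := by
      intro i
      have h := congrFun hzero i
      simp only [Pi.zero_apply] at h
      exact sub_eq_zero.mp h
    have hlam0 : W (2 * k - 1) ≠ 0 := by
      intro h0
      have h := hvu ⟨0, hn0⟩
      rw [h0, zero_mul] at h
      exact hv _ (sq_eq_zero_iff.mp h)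
    refine ⟨⟨W (2 * k - 1), hlam0, hvu⟩, ?_⟩
    have hWtop : W (2 * k) = W (2 * k - 1) * a := by
      have h1 : W (2 * k) = ∑ i, W (2 * k - 1) * u i * α i ^ (2 * k) := by
        simp only [hWdef]
        exact Finset.sum_congr rfl fun i _ => by rw [hvu i]
      rw [h1]
      rw [Finset.sum_congr rfl fun i _ => mul_assoc (W (2 * k - 1)) (u i) (α i ^ (2 * k)),
        ← Finset.mul_sum, hUtop]
    have hfin : (2 + a * η) * (η * W (2 * k - 1)) = 0 := by
      have h3 := hE3
      rw [show k - 1 + (k - 1) = 2 * k - 2 by omega,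
        show k - 1 + k = 2 * k - 1 by omega,
        show k + k = 2 * k by omega, hW2, hWtop, zero_add] at h3
      calc (2 + a * η) * (η * W (2 * k - 1))
          = η * W (2 * k - 1) + η * W (2 * k - 1)
            + η ^ 2 * (W (2 * k - 1) * a) := by ring
      _ = 0 := h3
    rcases mul_eq_zero.mp hfin with h | h
    · exact h
    · exact absurd h (mul_ne_zero hη hlam0)
  · rintro ⟨⟨lam, hlam0, hvu⟩, h2⟩
    have hWeq : ∀ m : ℕ, W m = lam * ∑ i, u i * α i ^ m := by
      intro m
      simp only [hWdef, Finset.mul_sum]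
      exact Finset.sum_congr rfl fun i _ => by rw [hvu i]; ring
    have hWlt : ∀ m : ℕ, m < 2 * k → W m = if m = 2 * k - 1 then lam else 0 := by
      intro m hm
      rw [hWeq, hUlt m hm]
      split_ifs <;> simp
    have hWtop : W (2 * k) = lam * a := by rw [hWeq, hUtop]
    ext j j'
    rw [hMM j j', Matrix.zero_apply]
    have hSj := j.isLt
    have hSj' := j'.isLt
    by_cases hj : (j : ℕ) = k - 1 <;> by_cases hj' : (j' : ℕ) = k - 1
    · rw [if_pos hj, if_pos hj', if_pos ⟨hj, hj'⟩, hj, hj',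
        show k - 1 + (k - 1) = 2 * k - 2 by omega,
        show k - 1 + k = 2 * k - 1 by omega,
        show k + k = 2 * k by omega,
        hWlt (2 * k - 2) (by omega), hWlt (2 * k - 1) (by omega),
        if_neg (by omega), if_pos rfl, hWtop]
      calc (0 : F) + η * lam + η * lam + η ^ 2 * (lam * a)
          = lam * η * (2 + a * η) := by ring
      _ = 0 := by rw [h2, mul_zero]
    · rw [if_neg hj', if_pos hj, if_neg (by omega), hj,
        hWlt (k - 1 + (j' : ℕ)) (by omega), hWlt ((j' : ℕ) + k) (by omega),
        if_neg (by omega), if_neg (by omega)]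
      simp
    · rw [if_pos hj', if_neg hj, if_neg (by omega), hj',
        hWlt ((j : ℕ) + (k - 1)) (by omega), hWlt ((j : ℕ) + k) (by omega),
        if_neg (by omega), if_neg (by omega)]
      simp
    · rw [if_neg hj, if_neg hj', if_neg (by omega),
        hWlt ((j : ℕ) + (j' : ℕ)) (by omega), if_neg (by omega)]
      simp
end
end

section
/- Let F be a finite field of odd characteristic, n = 2k with k ≥ 3, and C_k(α,v,η) a TGRS code of length n and dimension k. Suppose a := Σ_{i=1}^n α_i = 0 and η ≠ 0. Then C_k(α,v,η) is not a self-dual code. -/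
open Finset Polynomial

noncomputable section

lemma poly_step {F : Type*} [Field F] (N : ℕ) (α u : Fin (N + 2) → F)
    (hS : ∀ m, m ≤ N → ∑ i, u i * α i ^ m = 0) (ha : ∑ i, α i = 0) :
    ∑ i, u i * α i ^ (N + 2) = 0 := by
  set P : Polynomial F := ∏ i : Fin (N + 2), (X - C (α i)) with hP
  have hmonic : P.Monic := monic_prod_of_monic _ _ fun i _ => monic_X_sub_C _
  have hdeg : P.natDegree = N + 2 := by
    rw [hP, natDegree_prod _ _ fun i _ => X_sub_C_ne_zero _]
    simp
  have heval : ∀ i, P.eval (α i) = 0 := fun i => by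
    rw [hP, eval_prod]
    exact Finset.prod_eq_zero (mem_univ i) (by simp)
  have hc1 : P.coeff (N + 1) = 0 := by
    have h := prod_X_sub_C_coeff_card_pred (univ : Finset (Fin (N + 2))) α (by simp)
    simp only [card_univ, Fintype.card_fin, ← hP] at h
    rw [show N + 2 - 1 = N + 1 from rfl] at h
    rw [h, ha, neg_zero]
  have hc2 : P.coeff (N + 2) = 1 := by
    have := hmonic.coeff_natDegree
    rwa [hdeg] at this
  have key : ∀ i, P.eval (α i) = ∑ m ∈ Finset.range (N + 3), P.coeff m * α i ^ m := by
    intro i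
    rw [eval_eq_sum_range, hdeg]
  have h0 : (0 : F) = ∑ m ∈ Finset.range (N + 3), P.coeff m * ∑ i, u i * α i ^ m := by
    have h1 : (0 : F) = ∑ i, u i * P.eval (α i) := by simp [heval]
    rw [h1]
    simp_rw [key, Finset.mul_sum]
    rw [Finset.sum_comm]
    exact Finset.sum_congr rfl fun m _ =>
      Finset.sum_congr rfl fun i _ => mul_left_comm _ _ _
  rw [show N + 3 = (N + 1) + 1 + 1 from rfl, Finset.sum_range_succ, Finset.sum_range_succ] at h0
  have hz : ∑ m ∈ Finset.range (N + 1), P.coeff m * ∑ i, u i * α i ^ m = 0 :=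
    Finset.sum_eq_zero fun m hm => by
      rw [hS m (by simpa using Nat.lt_succ_iff.mp (Finset.mem_range.mp hm)), mul_zero]
  rw [hz, hc1, hc2, zero_add, zero_mul, zero_add, one_mul] at h0
  exact h0.symm

lemma poly_step' {F : Type*} [Field F] {n : ℕ} (hn : 2 ≤ n) (α u : Fin n → F)
    (hS : ∀ m, m + 2 ≤ n → ∑ i, u i * α i ^ m = 0) (ha : ∑ i, α i = 0) :
    ∑ i, u i * α i ^ n = 0 := by
  obtain ⟨N, rfl⟩ : ∃ N, n = N + 2 := ⟨n - 2, by omega⟩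
  exact poly_step N α u (fun m hm => hS m (by omega)) ha


/-- for `n = 2k`, `k ≥ 3`, if `a := Σ α_i = 0` and `η ≠ 0`, then the
TGRS code is not self-dual. -/
theorem tgrs_not_selfdual_a_eq_zero (F : Type*) [Field F] [Fintype F]
    (hchar : ringChar F ≠ 2) (n k : ℕ) (hk : 3 ≤ k) (hn : n = 2 * k)
    (α v : Fin n → F) (hα : Function.Injective α) (hv : ∀ i, v i ≠ 0)
    (η : F) (hη : η ≠ 0)
    (ha : ∑ i, α i = 0) :
    ¬ IsSelfDual (TGRSCode F n k α v η) := by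
  intro hsd
  obtain ⟨k', rfl⟩ : ∃ k', k = k' + 3 := ⟨k - 3, by omega⟩
  subst hn
  have heq : TGRSCode F (2 * (k' + 3)) (k' + 3) α v η
      = dualCode (TGRSCode F (2 * (k' + 3)) (k' + 3) α v η) := hsd
  set u : Fin (2 * (k' + 3)) → F := fun i => v i * v i with hu
  set S : ℕ → F := fun m => ∑ i, u i * α i ^ m with hSdef
  set ε : ℕ → F := fun j => if j = k' + 2 then η else 0 with hε
  -- basis codewords
  have mem : ∀ j, j < k' + 3 →
      (fun i => v i * (α i ^ j + ε j * α i ^ (k' + 3)))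
        ∈ TGRSCode F (2 * (k' + 3)) (k' + 3) α v η := by
    intro j hj
    refine ⟨fun m => if m = j then (1 : F) else 0, ?_⟩
    funext i
    have h1 : ∑ m ∈ Finset.range (k' + 3), (if m = j then (1:F) else 0) * α i ^ m
        = α i ^ j := by
      simp only [ite_mul, one_mul, zero_mul]
      rw [Finset.sum_ite_eq' (Finset.range (k' + 3)) j (fun m => α i ^ m),
        if_pos (Finset.mem_range.mpr hj)]
    rw [show k' + 3 - 1 = k' + 2 from rfl, h1]
    have h2 : ε j = η * (if k' + 2 = j then (1:F) else 0) := by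
      by_cases h : j = k' + 2
      · subst h; simp [hε]
      · simp [hε, h, Ne.symm h]
    rw [h2]
  -- orthogonality relations
  have orth : ∀ j l, j < k' + 3 → l < k' + 3 →
      S (j + l) + ε j * S (l + (k' + 3)) + ε l * S (j + (k' + 3))
        + ε j * ε l * S ((k' + 3) + (k' + 3)) = 0 := by
    intro j l hj hl
    have h1 := mem j hj
    have h2 := mem l hl
    rw [heq] at h2
    have h3 := h2 _ h1
    have expand : ∑ i, (v i * (α i ^ l + ε l * α i ^ (k' + 3)))
          * (v i * (α i ^ j + ε j * α i ^ (k' + 3)))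
        = S (j + l) + ε j * S (l + (k' + 3)) + ε l * S (j + (k' + 3))
          + ε j * ε l * S ((k' + 3) + (k' + 3)) := by
      simp only [hSdef, hu, Finset.mul_sum, pow_add]
      rw [← Finset.sum_add_distrib, ← Finset.sum_add_distrib, ← Finset.sum_add_distrib]
      exact Finset.sum_congr rfl fun i _ => by ring
    rw [← expand]
    exact h3
  have h2F : (2 : F) ≠ 0 := Ring.two_ne_zero hchar
  -- S m = 0 for m ≤ 2k'+2
  have S0 : ∀ m, m ≤ 2 * k' + 2 → S m = 0 := by
    intro m hm
    have h := orth (min m (k' + 1)) (m - min m (k' + 1)) (by omega) (by omega)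
    rw [show min m (k' + 1) + (m - min m (k' + 1)) = m by omega] at h
    simp only [hε, if_neg (show min m (k' + 1) ≠ k' + 2 by omega),
      if_neg (show m - min m (k' + 1) ≠ k' + 2 by omega),
      zero_mul, mul_zero, add_zero] at h
    exact h
  have S3 : S (2 * k' + 3) = 0 := by
    have h := orth k' (k' + 2) (by omega) (by omega)
    simp only [hε, if_neg (show k' ≠ k' + 2 by omega), if_pos rfl,
      zero_mul, mul_zero, add_zero, zero_add] at h
    rw [show k' + (k' + 2) = 2 * k' + 2 by omega,
      show k' + (k' + 3) = 2 * k' + 3 by omega, S0 _ (by omega), zero_add] at h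
    exact (mul_eq_zero.mp h).resolve_left hη
  have S4 : S (2 * k' + 4) = 0 := by
    have h := orth (k' + 1) (k' + 2) (by omega) (by omega)
    simp only [hε, if_neg (show k' + 1 ≠ k' + 2 by omega), if_pos rfl,
      zero_mul, mul_zero, add_zero, zero_add] at h
    rw [show k' + 1 + (k' + 2) = 2 * k' + 3 by omega,
      show k' + 1 + (k' + 3) = 2 * k' + 4 by omega, S3, zero_add] at h
    exact (mul_eq_zero.mp h).resolve_left hη
  have S6 : S (2 * k' + 6) = 0 := by
    have h := poly_step' (n := 2 * (k' + 3)) (by omega) α u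
      (fun m hm => by
        rcases show m ≤ 2 * k' + 2 ∨ m = 2 * k' + 3 ∨ m = 2 * k' + 4 by omega with h'|h'|h'
        · exact S0 m h'
        · rw [h']; exact S3
        · rw [h']; exact S4) ha
    rw [show 2 * k' + 6 = 2 * (k' + 3) by omega]
    exact h
  have S5 : S (2 * k' + 5) = 0 := by
    have h := orth (k' + 2) (k' + 2) (by omega) (by omega)
    simp only [hε, if_pos rfl] at h
    rw [show k' + 2 + (k' + 2) = 2 * k' + 4 by omega,
      show k' + 2 + (k' + 3) = 2 * k' + 5 by omega,
      show k' + 3 + (k' + 3) = 2 * k' + 6 by omega, S4, S6, zero_add, mul_zero,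
      add_zero] at h
    have h2 : (2 : F) * (η * S (2 * k' + 5)) = 0 := by linear_combination h
    have h3 := (mul_eq_zero.mp h2).resolve_left h2F
    exact (mul_eq_zero.mp h3).resolve_left hη
  have Sall : ∀ m, m ≤ 2 * k' + 5 → S m = 0 := by
    intro m hm
    rcases show m ≤ 2 * k' + 2 ∨ m = 2 * k' + 3 ∨ m = 2 * k' + 4 ∨ m = 2 * k' + 5
      by omega with h|h|h|h
    · exact S0 m h
    · rw [h]; exact S3
    · rw [h]; exact S4
    · rw [h]; exact S5
  have hu0 : u = 0 :=
    Matrix.eq_zero_of_forall_pow_sum_mul_pow_eq_zero hα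
      (fun i => Sall (i : ℕ) (by omega))
  have := congrFun hu0 ⟨0, by omega⟩
  exact hv _ (mul_self_eq_zero.mp this)
end
end

section
/- Let F be a finite field of odd characteristic, n = 2k with k ≥ 3, and C_k(α,v,η) a TGRS code of length n and dimension k. Suppose a := Σ_{i=1}^n α_i ≠ 0 and η = −a^{−1}. Then C_k(α,v,η) is not a self-dual code. -/
open Finset Polynomial

noncomputable section

/-- Power sums weighted by the squares of the multipliers. -/
def usum {F : Type*} [Field F] {n : ℕ} (α v : Fin n → F) (j : ℕ) : F :=
  ∑ i, v i ^ 2 * α i ^ j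

lemma evalsum {F : Type*} [Field F] {n : ℕ} (α v : Fin n → F) (p : Polynomial F)
    (hp : p.natDegree < n) :
    ∑ i, v i ^ 2 * p.eval (α i) = ∑ j ∈ Finset.range n, p.coeff j * usum α v j := by
  have he : ∀ i : Fin n, p.eval (α i) = ∑ j ∈ Finset.range n, p.coeff j * α i ^ j :=
    fun i => p.eval_eq_sum_range' hp _
  calc ∑ i, v i ^ 2 * p.eval (α i)
      = ∑ i, ∑ j ∈ Finset.range n, p.coeff j * (v i ^ 2 * α i ^ j) := by
        refine Finset.sum_congr rfl fun i _ => ?_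
        rw [he i, Finset.mul_sum]
        exact Finset.sum_congr rfl fun j _ => by ring
    _ = ∑ j ∈ Finset.range n, ∑ i, p.coeff j * (v i ^ 2 * α i ^ j) := Finset.sum_comm
    _ = ∑ j ∈ Finset.range n, p.coeff j * usum α v j := by
        refine Finset.sum_congr rfl fun j _ => ?_
        rw [usum, Finset.mul_sum]

/-- for `n = 2k`, `k ≥ 3`, if `a := Σ α_i ≠ 0` and `η = -a⁻¹`, then the
TGRS code is not self-dual. -/
theorem tgrs_not_selfdual_eta_eq_neg_inv (F : Type*) [Field F] [Fintype F]
    (hchar : ringChar F ≠ 2) (n k : ℕ) (hk : 3 ≤ k) (hn : n = 2 * k)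
    (α v : Fin n → F) (hα : Function.Injective α) (hv : ∀ i, v i ≠ 0)
    (η : F)
    (a : F) (ha : a = ∑ i, α i) (ha0 : a ≠ 0) (hηa : η = -a⁻¹) :
    ¬ IsSelfDual (TGRSCode F n k α v η) := by
  intro h
  have hη : η ≠ 0 := by
    rw [hηa]
    simpa using inv_ne_zero ha0
  -- orthogonality of any two codewords
  have key : ∀ c ∈ TGRSCode F n k α v η, ∀ c' ∈ TGRSCode F n k α v η,
      ∑ i, c i * c' i = 0 := by
    intro c hc c' hc'
    have hmem : c ∈ dualCode (TGRSCode F n k α v η) := h ▸ hc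
    exact hmem c' hc'
  -- the basic codewords
  have memC : ∀ m : ℕ, m < k →
      (fun i => v i * (α i ^ m + (if m = k - 1 then η else 0) * α i ^ k))
        ∈ TGRSCode F n k α v η := by
    intro m hm
    refine ⟨fun j => if j = m then 1 else 0, ?_⟩
    funext i
    congr 1
    have h1 : ∑ j ∈ Finset.range k, (if j = m then (1:F) else 0) * α i ^ j = α i ^ m := by
      rw [Finset.sum_eq_single m]
      · simp
      · intro j _ hj; simp [hj]
      · intro hmem; exact absurd (Finset.mem_range.mpr hm) hmem
    rw [h1]
    congr 1
    by_cases hm1 : m = k - 1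
    · simp [hm1]
    · have hne : ¬ (k - 1 = m) := fun e => hm1 e.symm
      simp [hm1, hne]
  -- the orthogonality relations in terms of the power sums
  have orel : ∀ m m' : ℕ, m < k → m' < k →
      usum α v (m + m') + (if m' = k - 1 then η else 0) * usum α v (m + k)
        + (if m = k - 1 then η else 0) * usum α v (m' + k)
        + (if m = k - 1 then η else 0) * (if m' = k - 1 then η else 0) * usum α v (k + k)
        = 0 := by
    intro m m' hm hm'
    have h0 := key _ (memC m hm) _ (memC m' hm')
    have hexp : ∀ i : Fin n,
        (v i * (α i ^ m + (if m = k - 1 then η else 0) * α i ^ k)) *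
          (v i * (α i ^ m' + (if m' = k - 1 then η else 0) * α i ^ k))
        = v i ^ 2 * α i ^ (m + m')
          + (if m' = k - 1 then η else 0) * (v i ^ 2 * α i ^ (m + k))
          + (if m = k - 1 then η else 0) * (v i ^ 2 * α i ^ (m' + k))
          + (if m = k - 1 then η else 0) * (if m' = k - 1 then η else 0)
              * (v i ^ 2 * α i ^ (k + k)) := by
      intro i; ring
    rw [Finset.sum_congr rfl (fun i _ => hexp i)] at h0
    simp only [Finset.sum_add_distrib, ← Finset.mul_sum] at h0
    simpa [usum] using h0
  -- low power sums vanish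
  have h1 : ∀ j ≤ 2 * k - 4, usum α v j = 0 := by
    intro j hj
    obtain ⟨m, m', hmm, hm, hm'⟩ : ∃ m m', m + m' = j ∧ m < k - 1 ∧ m' < k - 1 :=
      ⟨min j (k - 2), j - min j (k - 2), by omega, by omega, by omega⟩
    have := orel m m' (by omega) (by omega)
    rw [hmm, if_neg (by omega), if_neg (by omega)] at this
    simpa using this
  have h2 : usum α v (2 * k - 3) = 0 := by
    have := orel (k - 3) (k - 1) (by omega) (by omega)
    rw [if_pos rfl, if_neg (show ¬(k - 3 = k - 1) by omega),
      (by omega : k - 3 + (k - 1) = 2 * k - 4),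
      (by omega : k - 3 + k = 2 * k - 3)] at this
    rw [h1 _ le_rfl] at this
    have h' : η * usum α v (2 * k - 3) = 0 := by linear_combination this
    rcases mul_eq_zero.mp h' with h'' | h''
    · exact absurd h'' hη
    · exact h'' 
  have h3 : usum α v (2 * k - 2) = 0 := by
    have := orel (k - 2) (k - 1) (by omega) (by omega)
    rw [if_pos rfl, if_neg (show ¬(k - 2 = k - 1) by omega),
      (by omega : k - 2 + (k - 1) = 2 * k - 3),
      (by omega : k - 2 + k = 2 * k - 2)] at this
    rw [h2] at this
    have h' : η * usum α v (2 * k - 2) = 0 := by linear_combination this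
    rcases mul_eq_zero.mp h' with h'' | h''
    · exact absurd h'' hη
    · exact h''
  have hu2 : ∀ j ≤ 2 * k - 2, usum α v j = 0 := by
    intro j hj
    rcases (by omega : j ≤ 2 * k - 4 ∨ j = 2 * k - 3 ∨ j = 2 * k - 2) with h' | h' | h'
    · exact h1 j h'
    · rw [h']; exact h2
    · rw [h']; exact h3
  -- the top relation from the twisted monomial
  have h4 : usum α v (2 * k - 2) + η * usum α v (2 * k - 1) + η * usum α v (2 * k - 1)
      + η * η * usum α v (2 * k) = 0 := by
    have := orel (k - 1) (k - 1) (by omega) (by omega)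
    rw [if_pos rfl, (by omega : k - 1 + (k - 1) = 2 * k - 2),
      (by omega : k - 1 + k = 2 * k - 1), (by omega : k + k = 2 * k)] at this
    exact this
  -- polynomial step : usum (2k) = a * usum (2k-1)
  have hn0 : 0 < n := by omega
  set P : Polynomial F := ∏ i, (Polynomial.X - Polynomial.C (α i)) with hP
  have hPmonic : P.Monic := monic_prod_of_monic _ _ fun i _ => monic_X_sub_C (α i)
  have hPdeg : P.natDegree = n := by
    rw [hP, Polynomial.natDegree_prod _ _ fun i _ => Polynomial.X_sub_C_ne_zero (α i)]
    simp
  have hPnext : P.nextCoeff = -(∑ i, α i) := Polynomial.prod_X_sub_C_nextCoeff _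
  have hPcoeff : P.coeff (n - 1) = -a := by
    rw [ha, ← hPnext, Polynomial.nextCoeff_of_natDegree_pos (by omega : 0 < P.natDegree), hPdeg]
  set r : Polynomial F := Polynomial.X ^ n - P with hr
  have hrdeg : r.natDegree < n := by
    have hdP : P.degree = (n : WithBot ℕ) := by
      rw [Polynomial.degree_eq_natDegree hPmonic.ne_zero, hPdeg]
    have hd : r.degree < (n : WithBot ℕ) := by
      have hd1 : (Polynomial.X ^ n : Polynomial F).degree = P.degree := by
        rw [Polynomial.degree_X_pow, hdP]
      have hlc1 : (Polynomial.X ^ n : Polynomial F).leadingCoeff = P.leadingCoeff := by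
        rw [Polynomial.leadingCoeff_X_pow, hPmonic.leadingCoeff]
      have hstep := Polynomial.degree_sub_lt hd1 (pow_ne_zero n Polynomial.X_ne_zero) hlc1
      rw [← hr, Polynomial.degree_X_pow] at hstep
      exact hstep
    by_cases h0 : r = 0
    · rw [h0]; simpa using hn0
    · exact (Polynomial.natDegree_lt_iff_degree_lt h0).mpr (by exact_mod_cast hd)
  have hreval : ∀ i : Fin n, r.eval (α i) = α i ^ n := by
    intro i
    have hPz : P.eval (α i) = 0 := by
      rw [hP, Polynomial.eval_prod]
      exact Finset.prod_eq_zero (Finset.mem_univ i) (by simp)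
    simp [hr, hPz]
  have hrcoeff : r.coeff (n - 1) = a := by
    rw [hr, Polynomial.coeff_sub, Polynomial.coeff_X_pow, if_neg (by omega), hPcoeff]
    ring
  have hun : usum α v n = a * usum α v (n - 1) := by
    have he := evalsum α v r hrdeg
    have hl : ∑ i, v i ^ 2 * r.eval (α i) = usum α v n := by
      rw [usum]
      exact Finset.sum_congr rfl fun i _ => by rw [hreval i]
    rw [hl] at he
    rw [he, Finset.sum_eq_single_of_mem (n - 1) (Finset.mem_range.mpr (by omega))]
    · rw [hrcoeff]
    · intro j hjmem hjne
      rw [hu2 j (by have := Finset.mem_range.mp hjmem; omega), mul_zero]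
  -- conclude usum (2k-1) = 0
  have h5 : usum α v (2 * k - 1) = 0 := by
    have hηamul : η * a = -1 := by
      rw [hηa]; field_simp
    have hun' : usum α v (2 * k) = a * usum α v (2 * k - 1) := by
      rw [(show 2 * k = n by omega)]
      rw [hun, (show n - 1 = 2 * k - 1 by omega)]
    have h4' := h4
    rw [hu2 _ le_rfl, hun'] at h4'
    have hfin : η * usum α v (2 * k - 1) = 0 := by
      linear_combination h4' - usum α v (2 * k - 1) * η * hηamul
    rcases mul_eq_zero.mp hfin with h'' | h''
    · exact absurd h'' hη
    · exact h''
  have huall : ∀ j < n, usum α v j = 0 := by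
    intro j hj
    rcases (by omega : j ≤ 2 * k - 2 ∨ j = 2 * k - 1) with h' | h'
    · exact hu2 j h'
    · rw [h']; exact h5
  -- final contradiction via Lagrange basis polynomial
  classical
  have i0 : Fin n := ⟨0, hn0⟩
  set p : Polynomial F := Lagrange.basis Finset.univ α i0 with hp
  have hpdeg : p.natDegree < n := by
    rw [hp, Lagrange.natDegree_basis (hα.injOn) (Finset.mem_univ i0)]
    simpa using (by omega : n - 1 < n)
  have he := evalsum α v p hpdeg
  have hRHS : ∑ j ∈ Finset.range n, p.coeff j * usum α v j = 0 := by
    refine Finset.sum_eq_zero fun j hj => ?_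
    rw [huall j (Finset.mem_range.mp hj), mul_zero]
  have hLHS : ∑ i, v i ^ 2 * p.eval (α i) = v i0 ^ 2 := by
    rw [Finset.sum_eq_single_of_mem i0 (Finset.mem_univ i0)]
    · rw [hp, Lagrange.eval_basis_self (hα.injOn) (Finset.mem_univ i0), mul_one]
    · intro i _ hne
      rw [hp, Lagrange.eval_basis_of_ne (fun e => hne e.symm) (Finset.mem_univ i), mul_zero]
  rw [hLHS, hRHS] at he
  exact pow_ne_zero 2 (hv i0) he
end
end

section
/- Let p > 3 be a prime and F a finite field of characteristic p over which the polynomial m(x) = x^{2p} − x^{2p−1} + 2x^{p+1} + 3^{−1}x^3 + 1 splits completely, with roots α_1,…,α_{2p}. Assume gcd(m'(x), x^4 − (3 − 3^{−1})x^3 + 1) = 1 in F_p[x]. Then the roots α_1,…,α_{2p} are pairwise distinct, α_i^{p−1} + α_i ≠ 0 for all i, and, setting v_i := (α_i^{p−1} + α_i)^{−1}, α := (α_1,…,α_{2p}) and v := (v_1,…,v_{2p}), the TGRS code C_p(α,v,−2) (with twist coefficient η = −2) is a self-dual code of length 2p over F. -/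
open Finset Polynomial

noncomputable section


theorem basis_coeff {F : Type*} [Field F] {ι : Type*} [DecidableEq ι] {s : Finset ι}
    {v : ι → F} {i : ι} (hvs : Set.InjOn v s) (hi : i ∈ s) :
    (Lagrange.basis s v i).coeff (s.card - 1) =
      (∏ j ∈ s.erase i, (v i - v j))⁻¹ := by
  have hnd := Lagrange.natDegree_basis hvs hi
  have h1 : (Lagrange.basis s v i).coeff (s.card - 1) = (Lagrange.basis s v i).leadingCoeff := by
    rw [Polynomial.leadingCoeff, hnd]
  rw [h1, Lagrange.basis, leadingCoeff_prod]
  rw [← prod_inv_distrib]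
  refine prod_congr rfl fun j hj => ?_
  have hne : v i ≠ v j := by
    rw [mem_erase] at hj
    exact fun h => hj.1.symm (hvs hi hj.2 h)
  rw [Lagrange.basisDivisor, leadingCoeff_mul, leadingCoeff_C, leadingCoeff_X_sub_C, mul_one]

theorem sum_inv_prod_pow {F : Type*} [Field F] {ι : Type*} [DecidableEq ι] [Fintype ι]
    (v : ι → F) (hv : Function.Injective v) (m : ℕ) (hm : m ≤ Fintype.card ι - 1)
    (hc : 0 < Fintype.card ι) :
    ∑ i, (∏ j ∈ Finset.univ.erase i, (v i - v j))⁻¹ * v i ^ m =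
      if m = Fintype.card ι - 1 then 1 else 0 := by
  have hvs : Set.InjOn v ((Finset.univ : Finset ι) : Set ι) := fun a _ b _ h => hv h
  have hcard : (Finset.univ : Finset ι).card = Fintype.card ι := rfl
  have hm' : m < Fintype.card ι := lt_of_le_of_lt hm (Nat.pred_lt hc.ne')
  have hdeg : (X ^ m : F[X]).degree < ((Finset.univ : Finset ι).card : ℕ∞) := by
    rw [degree_X_pow, hcard]
    exact WithBot.coe_lt_coe.mpr hm'
  have hint := Lagrange.eq_interpolate hvs hdeg
  have := congrArg (fun q : F[X] => q.coeff (Fintype.card ι - 1)) hint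
  rw [coeff_X_pow] at this
  rw [Lagrange.interpolate_apply, finset_sum_coeff] at this
  simp only [coeff_C_mul, eval_pow, eval_X] at this
  have h2 : ∀ i ∈ (Finset.univ : Finset ι),
      v i ^ m * (Lagrange.basis Finset.univ v i).coeff (Fintype.card ι - 1)
      = (∏ j ∈ Finset.univ.erase i, (v i - v j))⁻¹ * v i ^ m := by
    intro i _
    rw [show Fintype.card ι - 1 = #(univ : Finset ι) - 1 from rfl, basis_coeff hvs (mem_univ i), mul_comm]
  rw [Finset.sum_congr rfl h2] at this
  rw [← this]
  simp [eq_comm]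

theorem eval_derivative_prod_aux {F : Type*} [Field F] [DecidableEq F] {ι : Type*} [DecidableEq ι] [Fintype ι]
    (v : ι → F) (i : ι) :
    eval (v i) (derivative (∏ j, (X - C (v j)))) =
      (Multiset.map (fun a => v i - a) ((Multiset.map v Finset.univ.val).erase (v i))).prod := by
  have hmem : v i ∈ Multiset.map v Finset.univ.val :=
    Multiset.mem_map.mpr ⟨i, Finset.mem_univ i, rfl⟩
  have h := Polynomial.eval_multiset_prod_X_sub_C_derivative (S := Multiset.map v Finset.univ.val) hmem
  rw [← h]
  congr 1
  rw [Finset.prod_eq_multiset_prod, Multiset.map_map]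
  rfl

theorem erase_map_univ {F : Type*} [Field F] [DecidableEq F] {ι : Type*} [DecidableEq ι] [Fintype ι]
    (v : ι → F) (i : ι) :
    ∃ t : Multiset ι, t = Finset.univ.val.erase i ∧
    (Multiset.map v Finset.univ.val).erase (v i) = Multiset.map v t := by
  refine ⟨Finset.univ.val.erase i, rfl, ?_⟩
  have h1 : Finset.univ.val = i ::ₘ Finset.univ.val.erase i :=
    (Multiset.cons_erase (Finset.mem_univ i)).symm
  conv_lhs => rw [h1, Multiset.map_cons, Multiset.erase_cons_head]

theorem eval_derivative_prod_zero {F : Type*} [Field F] {ι : Type*} [DecidableEq ι] [Fintype ι]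
    {v : ι → F} {i k : ι} (hik : i ≠ k) (h : v i = v k) :
    eval (v i) (derivative (∏ j, (X - C (v j)))) = 0 := by
  classical
  rw [eval_derivative_prod_aux]
  obtain ⟨t, ht, he⟩ := erase_map_univ v i
  rw [he]
  apply Multiset.prod_eq_zero
  rw [Multiset.map_map, Multiset.mem_map]
  refine ⟨k, ?_, by simp [h]⟩
  rw [ht]
  exact Multiset.mem_erase_of_ne (Ne.symm hik) |>.mpr (Finset.mem_univ k)

theorem eval_derivative_prod {F : Type*} [Field F] {ι : Type*} [DecidableEq ι] [Fintype ι]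
    (v : ι → F) (i : ι) :
    eval (v i) (derivative (∏ j, (X - C (v j)))) =
      ∏ j ∈ Finset.univ.erase i, (v i - v j) := by
  classical
  rw [eval_derivative_prod_aux]
  obtain ⟨t, ht, he⟩ := erase_map_univ v i
  rw [he, ht, Multiset.map_map, ← Finset.erase_val, ← Finset.prod_eq_multiset_prod]
  rfl

theorem deriv_m (p : ℕ) (hp : p.Prime) (hp3 : 3 < p) (F : Type*) [Field F] [CharP F p] :
    derivative (X ^ (2 * p) - X ^ (2 * p - 1) + 2 * X ^ (p + 1)
        + Polynomial.C ((3 : F)⁻¹) * X ^ 3 + 1 : F[X]) =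
      (X ^ (p - 1) + X : F[X]) ^ 2 := by
  have h3 : (3 : F) ≠ 0 := by
    intro h
    have h' := (CharP.cast_eq_zero_iff F p 3).mp (by exact_mod_cast h)
    have := Nat.le_of_dvd (by norm_num) h'
    omega
  have h2p : ((2 * p : ℕ) : F) = 0 := by
    simp [CharP.cast_eq_zero F p]
  have h2p1 : ((2 * p - 1 : ℕ) : F) = -1 := by
    rw [Nat.cast_sub (by omega)]
    rw [h2p]; simp
  have hp1 : ((p + 1 : ℕ) : F) = 1 := by
    push_cast [CharP.cast_eq_zero F p]; ring
  simp only [derivative_add, derivative_sub, derivative_one, derivative_X_pow, derivative_mul,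
    derivative_C, derivative_ofNat, h2p, h2p1, hp1, map_zero, map_one, map_neg, zero_mul,
    add_zero, zero_add, one_mul, mul_zero]
  have e1 : 2 * p - 1 - 1 = 2 * p - 2 := by omega
  have e2 : p + 1 - 1 = p := by omega
  rw [e1, e2]
  have hC3 : (C ((3:F)⁻¹) * (C ((3:ℕ):F) * X ^ (3-1)) : F[X]) = X ^ 2 := by
    rw [show ((3:ℕ):F) = (3:F) by norm_num, ← mul_assoc, ← map_mul, inv_mul_cancel₀ h3, map_one,
      one_mul]
  rw [hC3]
  have h2 : (X ^ (p-1) + X : F[X])^2 = X^(p-1) * X^(p-1) + 2 * (X^(p-1) * X) + X * X := by ring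
  rw [h2, ← pow_add, ← pow_succ, ← pow_two]
  have e4 : p - 1 + (p - 1) = 2*p - 2 := by omega
  have e5 : p - 1 + 1 = p := by omega
  rw [e4, e5]
  ring

theorem pairing {F : Type*} [Field F] {ι : Type*} [Fintype ι] (u w : ι → F) (p : ℕ) (hp : 5 ≤ p)
    (hS0 : ∀ m, m ≤ 2*p-2 → ∑ i, u i * w i ^ m = 0)
    (hS1 : ∑ i, u i * w i ^ (2*p-1) = 1)
    (hS2 : ∑ i, u i * w i ^ (2*p) = 1)
    (a b : ℕ → F) :
    ∑ i, u i * ((∑ j ∈ range (p+1), a j * w i ^ j) * (∑ l ∈ range (p+1), b l * w i ^ l)) =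
      a (p-1) * b p + a p * b (p-1) + a p * b p := by
  have step1 : ∀ i, u i * ((∑ j ∈ range (p+1), a j * w i ^ j) * (∑ l ∈ range (p+1), b l * w i ^ l))
      = ∑ j ∈ range (p+1), ∑ l ∈ range (p+1), (a j * b l) * (u i * w i ^ (j+l)) := by
    intro i
    rw [Finset.sum_mul_sum, Finset.mul_sum]
    apply Finset.sum_congr rfl
    intro j _
    rw [Finset.mul_sum]
    apply Finset.sum_congr rfl
    intro l _
    rw [pow_add]; ring
  rw [Finset.sum_congr rfl (fun i _ => step1 i)]
  rw [Finset.sum_comm]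
  have step2 : ∀ j ∈ range (p+1), ∑ i, ∑ l ∈ range (p+1), (a j * b l) * (u i * w i ^ (j+l))
      = ∑ l ∈ range (p+1), (a j * b l) * (∑ i, u i * w i ^ (j+l)) := by
    intro j _
    rw [Finset.sum_comm]
    refine sum_congr rfl fun l _ => ?_
    rw [Finset.mul_sum]
  rw [Finset.sum_congr rfl step2]
  -- now evaluate
  have hsplit : ∀ (f : ℕ → F), ∑ j ∈ range (p+1), f j = (∑ j ∈ range (p-1), f j) + f (p-1) + f p := by
    intro f
    rw [Finset.sum_range_succ, show p = (p-1)+1 by omega, Finset.sum_range_succ]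
    congr 3 <;> omega
  rw [hsplit]
  have inner_eval : ∀ j ≤ p, ∑ l ∈ range (p+1), (a j * b l) * (∑ i, u i * w i ^ (j+l))
      = (if j = p-1 then a j * b p else 0) +
        (if j = p then a j * b (p-1) + a j * b p else 0) := by
    intro j hj
    rw [hsplit]
    have hz : ∑ l ∈ range (p-1), (a j * b l) * (∑ i, u i * w i ^ (j+l)) = 0 := by
      refine Finset.sum_eq_zero fun l hl => ?_
      rw [mem_range] at hl
      rw [hS0 (j+l) (by omega), mul_zero]
    rw [hz, zero_add]
    rcases eq_or_lt_of_le hj with h | h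
    · rw [h]
      rw [show p + (p-1) = 2*p-1 by omega, show p + p = 2*p by omega, hS1, hS2,
        if_neg (by omega : ¬ (p = p-1)), if_pos rfl]
      ring
    · rcases Nat.lt_or_ge j (p-1) with h2 | h2
      · rw [hS0 (j+(p-1)) (by omega), hS0 (j+p) (by omega)]
        rw [if_neg (by omega : ¬ (j = p-1)), if_neg (by omega : ¬ (j = p))]
        ring
      · have hj1 : j = p - 1 := by omega
        rw [hj1]
        rw [hS0 ((p-1)+(p-1)) (by omega), show (p-1) + p = 2*p-1 by omega, hS1,
          if_pos rfl, if_neg (by omega : ¬ (p-1 = p))]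
        ring
  have hz2 : ∑ j ∈ range (p-1), ∑ l ∈ range (p+1), (a j * b l) * (∑ i, u i * w i ^ (j+l)) = 0 := by
    refine Finset.sum_eq_zero fun j hj => ?_
    rw [mem_range] at hj
    rw [inner_eval j (by omega), if_neg (by omega : ¬ (j = p-1)), if_neg (by omega : ¬ (j = p)),
      add_zero]
  rw [hz2, zero_add, inner_eval (p-1) (by omega), inner_eval p le_rfl,
    if_pos rfl, if_pos rfl, if_neg (by omega : ¬ (p-1 = p)), if_neg (by omega : ¬ (p = p-1))]
  ring
theorem key_root (p : ℕ) (hp : p.Prime) (hp3 : 3 < p)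
    (F : Type*) [Field F] [CharP F p]
    (hgcd : IsCoprime
      (derivative (X ^ (2 * p) - X ^ (2 * p - 1) + 2 * X ^ (p + 1)
        + Polynomial.C ((3 : ZMod p)⁻¹) * X ^ 3 + 1 : (ZMod p)[X]))
      (X ^ 4 - Polynomial.C ((3 : ZMod p) - (3 : ZMod p)⁻¹) * X ^ 3 + 1
        : (ZMod p)[X]))
    (β : F)
    (hm : eval β (X ^ (2 * p) - X ^ (2 * p - 1) + 2 * X ^ (p + 1)
        + Polynomial.C ((3 : F)⁻¹) * X ^ 3 + 1 : F[X]) = 0) :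
    β ^ (p - 1) + β ≠ 0 := by
  intro hb
  have hfact : Fact p.Prime := ⟨hp⟩
  have f : ZMod p →+* F := ZMod.castHom dvd_rfl F
  set f := ZMod.castHom (dvd_refl p) F with hf
  have h3cast : f ((3 : ZMod p)⁻¹) = (3 : F)⁻¹ := by
    rw [map_inv₀, map_ofNat]
  have hmap : (X ^ (2 * p) - X ^ (2 * p - 1) + 2 * X ^ (p + 1)
        + Polynomial.C ((3 : ZMod p)⁻¹) * X ^ 3 + 1 : (ZMod p)[X]).map f =
      (X ^ (2 * p) - X ^ (2 * p - 1) + 2 * X ^ (p + 1)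
        + Polynomial.C ((3 : F)⁻¹) * X ^ 3 + 1 : F[X]) := by
    simp [Polynomial.map_add, Polynomial.map_sub, Polynomial.map_pow, Polynomial.map_mul,
      Polynomial.map_ofNat, h3cast]
  have hgmap : (X ^ 4 - Polynomial.C ((3 : ZMod p) - (3 : ZMod p)⁻¹) * X ^ 3 + 1
        : (ZMod p)[X]).map f =
      (X ^ 4 - Polynomial.C ((3 : F) - (3 : F)⁻¹) * X ^ 3 + 1 : F[X]) := by
    simp [Polynomial.map_add, Polynomial.map_sub, Polynomial.map_pow, Polynomial.map_mul,
      h3cast, map_sub, map_ofNat]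
  have hcop := hgcd.map (Polynomial.mapRingHom f)
  simp only [Polynomial.coe_mapRingHom] at hcop
  rw [← Polynomial.derivative_map, hmap, hgmap] at hcop
  -- β is a common root
  have h3 : (3 : F) ≠ 0 := by
    intro h
    have h' := (CharP.cast_eq_zero_iff F p 3).mp (by exact_mod_cast h)
    have := Nat.le_of_dvd (by norm_num) h'
    omega
  have hβ0 : β ≠ 0 := by
    intro h0
    rw [h0] at hm
    simp only [eval_add, eval_sub, eval_pow, eval_mul, eval_X, eval_C, eval_one, eval_ofNat] at hm
    rw [zero_pow (by omega : (2*p) ≠ 0), zero_pow (by omega : (2*p-1) ≠ 0),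
      zero_pow (by omega : (p+1) ≠ 0), zero_pow (by omega : (3:ℕ) ≠ 0)] at hm
    simp at hm
  have hpm : β ^ (p - 1) = -β := eq_neg_of_add_eq_zero_left hb
  have hppow : β ^ p = -β ^ 2 := by
    have : β ^ p = β ^ (p - 1) * β := by
      rw [← pow_succ]; congr 1; omega
    rw [this, hpm]; ring
  have h2p : β ^ (2 * p) = β ^ 4 := by
    rw [show 2 * p = p + p by ring, pow_add, hppow]; ring
  have h2p1 : β ^ (2 * p - 1) = β ^ 3 := by
    have h : β ^ (2 * p - 1) * β = β ^ 3 * β := by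
      rw [← pow_succ, show 2 * p - 1 + 1 = 2 * p by omega, h2p]; ring
    exact mul_right_cancel₀ hβ0 h
  have hpp1 : β ^ (p + 1) = -β ^ 3 := by
    rw [pow_add, hppow]; ring
  have hgβ : eval β (X ^ 4 - Polynomial.C ((3 : F) - (3 : F)⁻¹) * X ^ 3 + 1 : F[X]) = 0 := by
    simp only [eval_add, eval_sub, eval_pow, eval_mul, eval_X, eval_C, eval_one]
    simp only [eval_add, eval_sub, eval_pow, eval_mul, eval_X, eval_C, eval_one, eval_ofNat,
      h2p, h2p1, hpp1] at hm
    linear_combination hm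
  have hdβ : eval β (derivative (X ^ (2 * p) - X ^ (2 * p - 1) + 2 * X ^ (p + 1)
        + Polynomial.C ((3 : F)⁻¹) * X ^ 3 + 1 : F[X])) = 0 := by
    rw [deriv_m p hp hp3 F]
    simp only [eval_pow, eval_add, eval_X]
    rw [hb]
    exact zero_pow (by norm_num)
  obtain ⟨u, v, huv⟩ := hcop
  have := congrArg (eval β) huv
  simp only [eval_add, eval_mul, eval_one, hgβ, hdβ, mul_zero, add_zero, zero_add] at this
  exact one_ne_zero this.symm


/-- let `p > 3` be prime and `F` a finite field of characteristic `p`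
over which `m(x) = x^{2p} - x^{2p-1} + 2x^{p+1} + 3⁻¹ x³ + 1` splits completely with
roots `α_1, …, α_{2p}`; assume `gcd(m'(x), x⁴ - (3 - 3⁻¹)x³ + 1) = 1` in `F_p[x]`.
Then the roots are pairwise distinct, `α_i^{p-1} + α_i ≠ 0` for all `i`, and the
TGRS code `C_p(α, v, -2)` with `v_i = (α_i^{p-1} + α_i)⁻¹` is self-dual. -/
theorem tgrs_selfdual_construction_Fq2p (p : ℕ) (hp : p.Prime) (hp3 : 3 < p)
    (F : Type*) [Field F] [Fintype F] [CharP F p]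
    (α : Fin (2 * p) → F)
    (hsplit : (X ^ (2 * p) - X ^ (2 * p - 1) + 2 * X ^ (p + 1)
        + Polynomial.C ((3 : F)⁻¹) * X ^ 3 + 1 : F[X]) =
      ∏ i, (X - Polynomial.C (α i)))
    (hgcd : IsCoprime
      (derivative (X ^ (2 * p) - X ^ (2 * p - 1) + 2 * X ^ (p + 1)
        + Polynomial.C ((3 : ZMod p)⁻¹) * X ^ 3 + 1 : (ZMod p)[X]))
      (X ^ 4 - Polynomial.C ((3 : ZMod p) - (3 : ZMod p)⁻¹) * X ^ 3 + 1
        : (ZMod p)[X])) :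
    Function.Injective α ∧ (∀ i, α i ^ (p - 1) + α i ≠ 0) ∧
      IsSelfDual (TGRSCode F (2 * p) p α
        (fun i => (α i ^ (p - 1) + α i)⁻¹) (-2)) := by
  have hp5 : 5 ≤ p := by
    rcases Nat.lt_or_ge p 5 with h | h
    · interval_cases p
      · exact absurd hp (by norm_num)
    · exact h
  -- each α i is a root of M
  have hroot : ∀ i, eval (α i) (X ^ (2 * p) - X ^ (2 * p - 1) + 2 * X ^ (p + 1)
      + Polynomial.C ((3 : F)⁻¹) * X ^ 3 + 1 : F[X]) = 0 := by
    intro i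
    rw [hsplit, eval_prod]
    exact Finset.prod_eq_zero (mem_univ i) (by simp)
  -- part 2
  have h2 : ∀ i, α i ^ (p - 1) + α i ≠ 0 :=
    fun i => key_root p hp hp3 F hgcd (α i) (hroot i)
  -- the square identity
  have hu : ∀ i, (α i ^ (p - 1) + α i) ^ 2 = ∏ j ∈ Finset.univ.erase i, (α i - α j) := by
    intro i
    have h2' := eval_derivative_prod α i
    rw [← hsplit, deriv_m p hp hp3 F] at h2'
    rw [← h2']
    simp
  -- part 1: injectivity
  have hinj : Function.Injective α := by
    intro i k h
    by_contra hne
    have hz : (∏ j ∈ Finset.univ.erase i, (α i - α j)) = 0 :=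
      Finset.prod_eq_zero (Finset.mem_erase.mpr ⟨Ne.symm hne, mem_univ k⟩) (by rw [h, sub_self])
    rw [← hu i] at hz
    exact h2 i (pow_eq_zero_iff (by norm_num) |>.mp hz)
  refine ⟨hinj, h2, ?_⟩
  set v : Fin (2*p) → F := fun i => (α i ^ (p - 1) + α i)⁻¹ with hv
  have hvne : ∀ i, v i ≠ 0 := fun i => inv_ne_zero (h2 i)
  have hv2 : ∀ i, v i ^ 2 = (∏ j ∈ Finset.univ.erase i, (α i - α j))⁻¹ := by
    intro i
    rw [hv, ← hu i, ← inv_pow]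
  have hcard : Fintype.card (Fin (2*p)) = 2*p := Fintype.card_fin _
  -- S sums
  have hSgen : ∀ m, m ≤ 2*p - 1 → ∑ i, v i ^ 2 * α i ^ m =
      if m = 2*p - 1 then 1 else 0 := by
    intro m hm
    have := sum_inv_prod_pow α hinj m (by rw [hcard]; omega) (by rw [hcard]; omega)
    rw [hcard] at this
    rw [← this]
    exact Finset.sum_congr rfl fun i _ => by rw [hv2 i]
  have hS0 : ∀ m, m ≤ 2*p - 2 → ∑ i, v i ^ 2 * α i ^ m = 0 := by
    intro m hm
    rw [hSgen m (by omega), if_neg (by omega)]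
  have hS1 : ∑ i, v i ^ 2 * α i ^ (2*p - 1) = 1 := by
    rw [hSgen _ le_rfl, if_pos rfl]
  have hS2 : ∑ i, v i ^ 2 * α i ^ (2*p) = 1 := by
    have e : ∀ i, v i ^ 2 * α i ^ (2*p) =
        v i ^ 2 * α i ^ (2*p-1) - 2 * (v i ^ 2 * α i ^ (p+1))
          - (3:F)⁻¹ * (v i ^ 2 * α i ^ 3) - v i ^ 2 * α i ^ 0 := by
      intro i
      have h := hroot i
      simp only [eval_add, eval_sub, eval_pow, eval_mul, eval_X, eval_C, eval_one,
        eval_ofNat] at h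
      rw [pow_zero]
      linear_combination (v i ^ 2) * h
    rw [Finset.sum_congr rfl fun i _ => e i]
    rw [Finset.sum_sub_distrib, Finset.sum_sub_distrib, Finset.sum_sub_distrib,
      ← Finset.mul_sum, ← Finset.mul_sum]
    rw [hS1, hS0 (p+1) (by omega), hS0 3 (by omega), hS0 0 (by omega)]
    ring
  -- the extension map
  set E : (Fin p → F) → (ℕ → F) := fun a j => if h : j < p then a ⟨j, h⟩ else 0 with hE
  have hEadd : ∀ x y j, E (x + y) j = E x j + E y j := by
    intro x y j
    rw [hE]
    by_cases h : j < p
    · simp [h]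
    · simp [h]
  have hEsmul : ∀ (c : F) x j, E (c • x) j = c * E x j := by
    intro c x j
    rw [hE]
    by_cases h : j < p
    · simp [h]
    · simp [h]
  set ψ : (Fin p → F) →ₗ[F] (Fin (2*p) → F) :=
    { toFun := fun a i => v i * ((∑ j ∈ Finset.range p, E a j * α i ^ j)
        + (-2) * E a (p-1) * α i ^ p)
      map_add' := by
        intro x y
        funext i
        simp only [hEadd, add_mul, Pi.add_apply]
        rw [Finset.sum_add_distrib]
        ring
      map_smul' := by
        intro c x
        funext i
        simp only [hEsmul, RingHom.id_apply, Pi.smul_apply, smul_eq_mul]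
        have h : (∑ j ∈ Finset.range p, c * E x j * α i ^ j)
            = c * ∑ j ∈ Finset.range p, E x j * α i ^ j := by
          rw [Finset.mul_sum]
          exact Finset.sum_congr rfl fun j _ => by ring
        rw [h]
        ring } with hψ
  -- the code is the range of ψ
  have hCW : TGRSCode F (2*p) p α v (-2) = ↑(LinearMap.range ψ) := by
    ext c
    constructor
    · rintro ⟨a, rfl⟩
      refine ⟨fun j => a j.val, ?_⟩
      rw [hψ]
      funext i
      simp only [LinearMap.coe_mk, AddHom.coe_mk]
      congr 2
      · refine Finset.sum_congr rfl fun j hj => ?_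
        rw [mem_range] at hj
        rw [hE]; simp only [dif_pos hj]
      · rw [hE]; simp only [dif_pos (by omega : p - 1 < p)]
    · rintro ⟨a, rfl⟩
      exact ⟨E a, rfl⟩
  -- injectivity of ψ
  have hψinj : Function.Injective ψ := by
    rw [← LinearMap.ker_eq_bot]
    rw [LinearMap.ker_eq_bot']
    intro a ha
    set q : F[X] := (∑ j ∈ Finset.range p, Polynomial.C (E a j) * X ^ j)
      + Polynomial.C (-2 * E a (p-1)) * X ^ p with hq
    have heval : ∀ i, eval (α i) q = 0 := by
      intro i
      have h := congrFun ha i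
      simp only [hψ, LinearMap.coe_mk, AddHom.coe_mk, Pi.zero_apply] at h
      have h' : (∑ j ∈ Finset.range p, E a j * α i ^ j) + (-2) * E a (p-1) * α i ^ p = 0 :=
        (mul_eq_zero.mp h).resolve_left (hvne i)
      rw [hq]
      simp only [eval_add, eval_mul, eval_pow, eval_X, eval_C, eval_finset_sum]
      rw [← h']
    have hdeg : q.natDegree < Fintype.card (Fin (2*p)) := by
      rw [hcard]
      have h1 : q.natDegree ≤ p := by
        rw [hq]
        refine le_trans (natDegree_add_le _ _) (max_le ?_ ?_)
        · refine Polynomial.natDegree_sum_le_of_forall_le _ _ fun j hj => ?_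
          refine le_trans (natDegree_C_mul_le _ _) ?_
          rw [natDegree_X_pow]
          rw [mem_range] at hj; omega
        · exact le_trans (natDegree_C_mul_le _ _) (by rw [natDegree_X_pow])
      omega
    have hq0 : q = 0 := eq_zero_of_natDegree_lt_card_of_eval_eq_zero q hinj heval hdeg
    funext j
    have hcoeff : q.coeff j.val = E a j.val := by
      rw [hq, coeff_add, coeff_C_mul, coeff_X_pow, if_neg (by omega : ¬ (j.val = p)),
        mul_zero, add_zero, finset_sum_coeff]
      have : ∀ l ∈ Finset.range p, (Polynomial.C (E a l) * X ^ l).coeff j.val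
          = if l = j.val then E a l else 0 := by
        intro l _
        rw [coeff_C_mul, coeff_X_pow]
        by_cases h : l = j.val
        · rw [if_pos h.symm, if_pos h, mul_one]
        · rw [if_neg (fun hh => h hh.symm), if_neg h, mul_zero]
      rw [Finset.sum_congr rfl this, Finset.sum_ite_eq' (Finset.range p) j.val (fun l => E a l)]
      rw [if_pos (mem_range.mpr j.isLt)]
    rw [hq0, coeff_zero] at hcoeff
    have : E a j.val = a j := by
      rw [hE]; simp only [dif_pos j.isLt]
    rw [this] at hcoeff
    exact hcoeff.symm
  -- bilinear form
  set B : LinearMap.BilinForm F (Fin (2*p) → F) :=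
    LinearMap.mk₂ F (fun x y => ∑ i, x i * y i)
      (fun x x' y => by
        simp only [Pi.add_apply, add_mul, Finset.sum_add_distrib])
      (fun c x y => by
        simp only [Pi.smul_apply, smul_eq_mul, Finset.mul_sum, mul_assoc])
      (fun x y y' => by
        simp only [Pi.add_apply, mul_add, Finset.sum_add_distrib])
      (fun c x y => by
        simp only [Pi.smul_apply, smul_eq_mul, Finset.mul_sum]
        exact Finset.sum_congr rfl fun i _ => by ring) with hB
  have hBapp : ∀ x y, B x y = ∑ i, x i * y i := fun x y => rfl
  have hrefl : B.IsRefl := by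
    intro x y h
    rw [hBapp] at h ⊢
    rw [← h]
    exact Finset.sum_congr rfl fun i _ => mul_comm _ _
  -- orthogonal complement of ⊤ is ⊥
  have htop : B.orthogonal ⊤ = ⊥ := by
    rw [Submodule.eq_bot_iff]
    intro x hx
    funext i
    have h := hx (Pi.single i 1) Submodule.mem_top
    rw [hBapp] at h
    rw [Finset.sum_eq_single i (fun b _ hb => by simp [Pi.single_apply, hb]) (by simp)] at h
    simpa using h
  -- orthogonality: C ⊆ C^⊥
  have hortho : ∀ a b : ℕ → F,
      ∑ i, (v i * ((∑ j ∈ Finset.range p, a j * α i ^ j) + (-2) * a (p-1) * α i ^ p))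
        * (v i * ((∑ j ∈ Finset.range p, b j * α i ^ j) + (-2) * b (p-1) * α i ^ p)) = 0 := by
    intro a b
    set a' : ℕ → F := fun j => if j = p then -2 * a (p-1) else a j with ha'
    set b' : ℕ → F := fun j => if j = p then -2 * b (p-1) else b j with hb'
    have hpair := pairing (fun i => v i ^ 2) α p hp5 hS0 hS1 hS2 a' b'
    have hrw : ∀ i, (v i * ((∑ j ∈ Finset.range p, a j * α i ^ j) + (-2) * a (p-1) * α i ^ p))
        * (v i * ((∑ j ∈ Finset.range p, b j * α i ^ j) + (-2) * b (p-1) * α i ^ p))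
        = v i ^ 2 * ((∑ j ∈ range (p+1), a' j * α i ^ j) * (∑ l ∈ range (p+1), b' l * α i ^ l)) := by
      intro i
      have hA : (∑ j ∈ range (p+1), a' j * α i ^ j)
          = (∑ j ∈ Finset.range p, a j * α i ^ j) + (-2) * a (p-1) * α i ^ p := by
        rw [Finset.sum_range_succ, ha']
        simp only [if_pos rfl]
        congr 1
        refine Finset.sum_congr rfl fun j hj => ?_
        rw [mem_range] at hj
        rw [if_neg (by omega)]
      have hBB : (∑ j ∈ range (p+1), b' j * α i ^ j)
          = (∑ j ∈ Finset.range p, b j * α i ^ j) + (-2) * b (p-1) * α i ^ p := by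
        rw [Finset.sum_range_succ, hb']
        simp only [if_pos rfl]
        congr 1
        refine Finset.sum_congr rfl fun j hj => ?_
        rw [mem_range] at hj
        rw [if_neg (by omega)]
      rw [hA, hBB]
      ring
    rw [Finset.sum_congr rfl fun i _ => hrw i, hpair]
    rw [ha', hb']
    simp only [if_neg (show ¬(p - 1 = p) by omega), if_pos rfl, if_true]
    ring
  -- finrank computations
  have hrankW : Module.finrank F (LinearMap.range ψ) = p := by
    rw [LinearMap.finrank_range_of_inj hψinj, Module.finrank_pi, Fintype.card_fin]
  have hrankV : Module.finrank F (Fin (2*p) → F) = 2*p := by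
    rw [Module.finrank_pi, Fintype.card_fin]
  have hWle : LinearMap.range ψ ≤ B.orthogonal (LinearMap.range ψ) := by
    intro x hx
    intro n hn
    rw [hBapp]
    obtain ⟨a, rfl⟩ := hn
    obtain ⟨c, rfl⟩ := hx
    have := hortho (E a) (E c)
    rw [hψ]
    simpa using this
  have hoW : Module.finrank F (B.orthogonal (LinearMap.range ψ)) = p := by
    have h := LinearMap.BilinForm.finrank_add_finrank_orthogonal hrefl (LinearMap.range ψ)
    rw [hrankW, hrankV, htop, inf_bot_eq, finrank_bot] at h
    omega
  have hWeq : LinearMap.range ψ = B.orthogonal (LinearMap.range ψ) :=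
    Submodule.eq_of_le_of_finrank_le hWle (by rw [hoW, hrankW])
  -- conclude
  rw [IsSelfDual, hCW]
  ext x
  simp only [dualCode, Set.mem_setOf_eq, hCW]
  constructor
  · intro hx
    intro c hc
    have hx' : x ∈ B.orthogonal (LinearMap.range ψ) := hWeq ▸ hx
    have := hx' c hc
    rw [hBapp] at this
    rw [← this]
    exact Finset.sum_congr rfl fun i _ => mul_comm _ _
  · intro hx
    rw [hWeq]
    intro n hn
    rw [hBapp]
    have := hx n hn
    rw [← this]
    exact Finset.sum_congr rfl fun i _ => mul_comm _ _
end
end
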